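/- arXiv:1801.08632 — 6 statements merged into one kernel-verified Lean document; each statement's English description precedes it below -/
import Mathlib

section
/- Assume ⌊(e₁+e₂−1)/p⌋ > ⌊(e₁−1)/p⌋ + ⌊(e₂−1)/p⌋. Then p does not divide the binomial coefficient C(e₂−1, pw−e₁) and p does not divide the binomial coefficient C(e₂−1, pw−e₁+1). -/
/-- If `k ≤ n % p` for a prime `p`, then `p` does not divide `n.choose k`. -/
lemma aux_not_dvd_choose {p n k : ℕ} (hp : p.Prime) (hk : k ≤ n % p) :
    ¬ p ∣ n.choose k := by
  have : Fact p.Prime := ⟨hp⟩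
  have hkp : k < p := lt_of_le_of_lt hk (Nat.mod_lt _ hp.pos)
  have hmod := Choose.choose_modEq_choose_mod_mul_choose_div_nat (n := n) (k := k) (p := p)
  rw [Nat.mod_eq_of_lt hkp, Nat.div_eq_of_lt hkp, Nat.choose_zero_right, mul_one] at hmod
  intro hdvd
  have h0 : p ∣ (n % p).choose k := by
    have := (Nat.modEq_zero_iff_dvd.mpr hdvd).symm.trans hmod
    exact Nat.modEq_zero_iff_dvd.mp this.symm
  have h1 : (n % p).choose k ∣ Nat.factorial (n % p) := by
    have := Nat.choose_mul_factorial_mul_factorial hk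
    exact ⟨Nat.factorial k * Nat.factorial (n % p - k), by rw [← mul_assoc, this]⟩
  have h2 : p ∣ Nat.factorial (n % p) := h0.trans h1
  have := (Nat.Prime.dvd_factorial hp).mp h2
  have := Nat.mod_lt n hp.pos
  omega

/-- Let `p` be an odd prime, `e₁ ≥ e₂ ≥ 2` integers with `e₁, e₂, e₁+e₂ ≢ 1 (mod p)`, and let
`pw` be the smallest multiple of `p` that is at least `e₁`.  If
`⌊(e₁+e₂−1)/p⌋ > ⌊(e₁−1)/p⌋ + ⌊(e₂−1)/p⌋`, then `p ∤ C(e₂−1, pw−e₁)` and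
`p ∤ C(e₂−1, pw−e₁+1)`. -/
theorem stmt3 (p e₁ e₂ pw : ℕ) (hp : p.Prime) (hodd : Odd p)
    (he₂ : 2 ≤ e₂) (hle : e₂ ≤ e₁)
    (h₁ : ¬ e₁ ≡ 1 [MOD p]) (h₂ : ¬ e₂ ≡ 1 [MOD p]) (h₁₂ : ¬ e₁ + e₂ ≡ 1 [MOD p])
    (hpw : p ∣ pw ∧ e₁ ≤ pw ∧ ∀ w : ℕ, p ∣ w → e₁ ≤ w → pw ≤ w)
    (hfloor : (e₁ - 1) / p + (e₂ - 1) / p < (e₁ + e₂ - 1) / p) :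
    ¬ p ∣ (e₂ - 1).choose (pw - e₁) ∧ ¬ p ∣ (e₂ - 1).choose (pw - e₁ + 1) := by
  obtain ⟨hdvd, hle₁, hmin⟩ := hpw
  have hppos : 0 < p := hp.pos
  set x := e₁ - 1 with hx
  set y := e₂ - 1 with hy
  set a := x % p with ha
  set b := y % p with hb
  have halt : a < p := Nat.mod_lt _ hppos
  have hblt : b < p := Nat.mod_lt _ hppos
  have hxd := Nat.div_add_mod x p
  have hyd := Nat.div_add_mod y p
  -- Step 1: a + b ≥ p
  have hsum : x + y + 1 = p * (x / p + y / p) + (a + b + 1) := by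
    rw [Nat.mul_add]
    have h1 := Nat.div_add_mod x p
    have h2 := Nat.div_add_mod y p
    omega
  have hdiv : (x + y + 1) / p = x / p + y / p + (a + b + 1) / p := by
    rw [hsum, Nat.mul_add_div hppos]
  have hxy1 : e₁ + e₂ - 1 = x + y + 1 := by omega
  have hstep1 : p ≤ a + b + 1 := by
    rw [hxy1, hdiv] at hfloor
    have h1 : 1 ≤ (a + b + 1) / p := by omega
    have := (Nat.le_div_iff_mul_le hppos).mp h1
    omega
  have hab : p ≤ a + b := by
    rcases Nat.lt_or_ge (a + b) p with h | h
    · -- then a + b + 1 = p, contradiction with h₁₂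
      have heq : a + b + 1 = p := by omega
      exfalso
      apply h₁₂
      have hx1 : e₁ + e₂ = x + y + 2 := by omega
      have hxa : x ≡ a [MOD p] := (Nat.mod_modEq x p).symm
      have hyb : y ≡ b [MOD p] := (Nat.mod_modEq y p).symm
      calc e₁ + e₂ = x + y + 2 := hx1
        _ ≡ a + b + 2 [MOD p] := by exact Nat.ModEq.add_right 2 (hxa.add hyb)
        _ = p + 1 := by omega
        _ ≡ 0 + 1 [MOD p] := Nat.ModEq.add_right 1 (Nat.modEq_zero_iff_dvd.mpr dvd_rfl)
        _ = 1 := by omega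
    · exact h
  -- Step 2: r := pw - e₁ < p
  set r := pw - e₁ with hr
  have hrlt : r < p := by
    by_contra hcon
    push_neg at hcon
    have h1 : p ∣ pw - p := Nat.dvd_sub hdvd dvd_rfl
    have h2 : e₁ ≤ pw - p := by omega
    have := hmin (pw - p) h1 h2
    omega
  -- Step 3: a + 1 + r = p
  have hkey : a + 1 + r = p := by
    have hpwr : pw = p * (x / p) + (a + 1 + r) := by omega
    have hd2 : p ∣ a + 1 + r := by
      have : p ∣ p * (x / p) + (a + 1 + r) := hpwr ▸ hdvd
      exact (Nat.dvd_add_right (Dvd.intro _ rfl)).mp this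
    have hlt2 : a + 1 + r < 2 * p := by omega
    have hd3 : p ∣ a + 1 + r - p := Nat.dvd_sub hd2 dvd_rfl
    have hple : p ≤ a + 1 + r := Nat.le_of_dvd (by omega) hd2
    have := Nat.eq_zero_of_dvd_of_lt hd3 (by omega)
    omega
  -- conclude
  have hrb : r + 1 ≤ b := by omega
  exact ⟨aux_not_dvd_choose hp (by omega), aux_not_dvd_choose hp (by omega)⟩
end

section
/- Assume ⌊(e₁+e₂−1)/p⌋ > ⌊(e₁−1)/p⌋ + ⌊(e₂−1)/p⌋. Then p does not divide the integer Z := ∑_{k=0}^{pw−e₁} (−1)^{e₂−1−k} · C(e₂−1, k). -/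
lemma alt_sum (n : ℕ) (hn : 1 ≤ n) (m : ℕ) :
    ∑ k ∈ Finset.range (m+1), (-1:ℤ)^k * (n.choose k : ℤ) = (-1)^m * ((n-1).choose m : ℤ) := by
  induction m with
  | zero => simp
  | succ m ih =>
    rw [Finset.sum_range_succ, ih]
    have hps : n.choose (m+1) = (n-1).choose m + (n-1).choose (m+1) := by
      conv_lhs => rw [show n = (n-1)+1 by omega]
      rw [Nat.choose_succ_succ]
    rw [hps]
    push_cast
    ring

lemma not_dvd_choose_small (p a m : ℕ) (hp : p.Prime) (ha : a < p) (hm : m ≤ a) :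
    ¬ p ∣ a.choose m := by
  intro h
  have hfac : p ∣ a.factorial := by
    rw [← Nat.choose_mul_factorial_mul_factorial hm]
    exact (h.mul_right _).mul_right _
  exact absurd ((Nat.Prime.dvd_factorial hp).mp hfac) (by omega)

/-- With `p` an odd prime, `e₁ ≥ e₂ ≥ 2` with `e₁, e₂, e₁+e₂ ≢ 1 (mod p)`, and `pw` the
smallest multiple of `p` at least `e₁`: if `⌊(e₁+e₂−1)/p⌋ > ⌊(e₁−1)/p⌋ + ⌊(e₂−1)/p⌋`, then
`p` does not divide `Z := ∑_{k=0}^{pw−e₁} (−1)^{e₂−1−k} C(e₂−1, k)`. -/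
theorem stmt4 (p e₁ e₂ pw : ℕ) (hp : p.Prime) (hodd : Odd p)
    (he₂ : 2 ≤ e₂) (hle : e₂ ≤ e₁)
    (h₁ : ¬ e₁ ≡ 1 [MOD p]) (h₂ : ¬ e₂ ≡ 1 [MOD p]) (h₁₂ : ¬ e₁ + e₂ ≡ 1 [MOD p])
    (hpw : p ∣ pw ∧ e₁ ≤ pw ∧ ∀ w : ℕ, p ∣ w → e₁ ≤ w → pw ≤ w)
    (hfloor : (e₁ - 1) / p + (e₂ - 1) / p < (e₁ + e₂ - 1) / p) :
    ¬ (p : ℤ) ∣ ∑ k ∈ Finset.range (pw - e₁ + 1),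
        (-1 : ℤ) ^ (e₂ - 1 - k) * ((e₂ - 1).choose k : ℤ) := by
  haveI : Fact p.Prime := ⟨hp⟩
  have hp2 : 2 ≤ p := hp.two_le
  obtain ⟨q₁, r₁, hd₁, hr₁lt, hq₁⟩ : ∃ q r, e₁ - 1 = p * q + r ∧ r < p ∧ (e₁ - 1) / p = q :=
    ⟨_, _, (Nat.div_add_mod _ _).symm, Nat.mod_lt _ (by omega), rfl⟩
  obtain ⟨q₂, r₂, hd₂, hr₂lt, hq₂⟩ : ∃ q r, e₂ - 1 = p * q + r ∧ r < p ∧ (e₂ - 1) / p = q :=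
    ⟨_, _, (Nat.div_add_mod _ _).symm, Nat.mod_lt _ (by omega), rfl⟩
  rw [hq₁, hq₂] at hfloor
  have hC : p * (q₁ + 1) = p * q₁ + p := by ring
  have hA : p * (q₁ + q₂) = p * q₁ + p * q₂ := by ring
  have hB : p * (q₁ + q₂ + 1) = p * q₁ + p * q₂ + p := by ring
  -- r₁, r₂ ≥ 1
  have hr₁pos : 1 ≤ r₁ := by
    rcases Nat.eq_zero_or_pos r₁ with h | h
    · exfalso; apply h₁
      show e₁ % p = 1 % p
      rw [Nat.mod_eq_of_lt (by omega : 1 < p), show e₁ = 1 + p * q₁ by omega,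
        Nat.add_mul_mod_self_left, Nat.mod_eq_of_lt (by omega)]
    · exact h
  have hr₂pos : 1 ≤ r₂ := by
    rcases Nat.eq_zero_or_pos r₂ with h | h
    · exfalso; apply h₂
      show e₂ % p = 1 % p
      rw [Nat.mod_eq_of_lt (by omega : 1 < p), show e₂ = 1 + p * q₂ by omega,
        Nat.add_mul_mod_self_left, Nat.mod_eq_of_lt (by omega)]
    · exact h
  -- floor condition gives r₁ + r₂ + 1 ≥ p
  have hsum : (e₁ + e₂ - 1) / p = (r₁ + r₂ + 1) / p + (q₁ + q₂) := by
    rw [show e₁ + e₂ - 1 = (r₁ + r₂ + 1) + p * (q₁ + q₂) by omega,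
      Nat.add_mul_div_left _ _ (by omega : 0 < p)]
  have hcarry : p ≤ r₁ + r₂ + 1 := by
    by_contra h
    rw [hsum, Nat.div_eq_of_lt (by omega)] at hfloor
    omega
  have hne : r₁ + r₂ + 1 ≠ p := by
    intro h
    apply h₁₂
    show (e₁ + e₂) % p = 1 % p
    rw [Nat.mod_eq_of_lt (by omega : 1 < p), show e₁ + e₂ = 1 + p * (q₁ + q₂ + 1) by omega,
      Nat.add_mul_mod_self_left, Nat.mod_eq_of_lt (by omega)]
  have hrr : p ≤ r₁ + r₂ := by omega
  -- pw = p * (q₁ + 1)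
  obtain ⟨hdvd, hlepw, hmin⟩ := hpw
  obtain ⟨t, ht⟩ := hdvd
  have hpw_eq : pw = p * (q₁ + 1) := by
    have h1 : pw ≤ p * (q₁ + 1) := hmin _ ⟨q₁ + 1, rfl⟩ (by omega)
    have h2 : q₁ < t := by
      by_contra h
      push_neg at h
      have : p * t ≤ p * q₁ := Nat.mul_le_mul_left _ h
      omega
    have : p * (q₁ + 1) ≤ p * t := Nat.mul_le_mul_left _ (by omega)
    omega
  have hm : pw - e₁ = p - 1 - r₁ := by omega
  set m := pw - e₁ with hmdef
  have hmr : m ≤ r₂ - 1 := by omega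
  set n := e₂ - 1 with hn
  have hn1 : 1 ≤ n := by omega
  have hmn : m ≤ n := by omega
  have key : ∑ k ∈ Finset.range (m + 1), (-1 : ℤ) ^ (n - k) * (n.choose k : ℤ)
      = (-1)^n * ((-1)^m * ((n-1).choose m : ℤ)) := by
    rw [← alt_sum n hn1 m, Finset.mul_sum]
    apply Finset.sum_congr rfl
    intro k hk
    rw [Finset.mem_range] at hk
    have hkn : k ≤ n := by omega
    have h1 : ((-1 : ℤ)^k) * ((-1)^k) = 1 := by
      rw [← pow_add]; exact Even.neg_one_pow ⟨k, rfl⟩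
    have h2 : (-1 : ℤ) ^ (n - k) = (-1)^n * (-1)^k := by
      calc (-1 : ℤ) ^ (n - k) = (-1)^(n-k) * ((-1)^k * (-1)^k) := by rw [h1, mul_one]
        _ = ((-1)^(n-k) * (-1)^k) * (-1)^k := by ring
        _ = (-1)^n * (-1)^k := by rw [← pow_add, Nat.sub_add_cancel hkn]
    rw [h2]; ring
  intro hdvdZ
  rw [key] at hdvdZ
  have hdvdN : p ∣ (n - 1).choose m := by
    have := Int.natAbs_dvd_natAbs.mpr hdvdZ
    simpa [Int.natAbs_mul, Int.natAbs_pow] using this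
  have hluc : (n - 1).choose m ≡ ((n-1) % p).choose (m % p) * ((n-1) / p).choose (m / p) [MOD p] :=
    Choose.choose_modEq_choose_mod_mul_choose_div_nat
  have hNp : (n - 1) % p = r₂ - 1 := by
    rw [show n - 1 = (r₂ - 1) + p * q₂ by omega, Nat.add_mul_mod_self_left,
      Nat.mod_eq_of_lt (by omega)]
  have hNd : (n - 1) / p = q₂ := by
    rw [show n - 1 = (r₂ - 1) + p * q₂ by omega,
      Nat.add_mul_div_left _ _ (by omega : 0 < p), Nat.div_eq_of_lt (by omega)]
    omega
  have hmp : m % p = m := Nat.mod_eq_of_lt (by omega)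
  have hmd : m / p = 0 := Nat.div_eq_of_lt (by omega)
  rw [hNp, hNd, hmp, hmd, Nat.choose_zero_right, mul_one] at hluc
  have hdvd2 : p ∣ (r₂ - 1).choose m :=
    (Nat.modEq_zero_iff_dvd).mp (hluc.symm.trans (Nat.modEq_zero_iff_dvd.mpr hdvdN))
  exact not_dvd_choose_small p (r₂ - 1) m hp (by omega) hmr hdvd2
end

section
/- Let p be an odd prime and let k be a field of characteristic p. Then the polynomial ∑_{i=0}^{(p−1)/2} C((p−1)/2, i)² · X^{(p−1)/2 − i} in k[X] is separable, i.e., it is coprime to its derivative. -/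
open Polynomial Finset

/-- The Hasse polynomial `∑ C(m,j)² X^j`. -/
noncomputable def hassePoly (m : ℕ) (K : Type*) [Field K] : K[X] :=
  ∑ j ∈ Finset.range (m + 1), C ((m.choose j : K) ^ 2) * X ^ j

section aux

variable {K : Type*} [Field K] (m : ℕ)

lemma hassePoly_coeff (n : ℕ) :
    (hassePoly m K).coeff n = if n ≤ m then (m.choose n : K) ^ 2 else 0 := by
  rw [hassePoly, finset_sum_coeff]
  simp only [coeff_C_mul, coeff_X_pow, mul_ite, mul_one, mul_zero]
  rw [Finset.sum_ite_eq (Finset.range (m + 1)) n (fun j => (m.choose j : K) ^ 2)]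
  simp [Nat.lt_succ_iff]

lemma hassePoly_natDegree_le : (hassePoly m K).natDegree ≤ m := by
  rw [Polynomial.natDegree_le_iff_coeff_eq_zero]
  intro N hN
  rw [hassePoly_coeff, if_neg (by omega)]

lemma hassePoly_ne_zero : hassePoly m K ≠ 0 := by
  intro h
  have := hassePoly_coeff (K := K) m 0
  rw [h] at this
  simp at this

lemma hassePoly_term (c b : K) (j : ℕ) (hj : j ≤ m) (hb : b = ((2 * m - 1 : ℕ) : K)) :
    X * (1 - X) * derivative (derivative (C c * X ^ j)) + derivative (C c * X ^ j)
      + C b * X * derivative (C c * X ^ j)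
    = C (c * ((j ^ 2 : ℕ) : K)) * X ^ (j - 1)
      + (C ((m : K) ^ 2 * c) * X ^ j - C (c * (((m - j) ^ 2 : ℕ) : K)) * X ^ j) := by
  subst hb
  match j, hj with
  | 0, hj =>
      simp only [pow_zero, Nat.zero_sub, Nat.sub_zero, mul_one, Nat.cast_pow]
      simp [derivative_one]
      ring
  | 1, hj =>
      have h1 : ((2 * m - 1 : ℕ) : K) = 2 * (m : K) - 1 := by
        push_cast [Nat.cast_sub (by omega : 1 ≤ 2 * m)]; ring
      have h2 : (((m - 1) ^ 2 : ℕ) : K) = ((m : K) - 1) ^ 2 := by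
        push_cast [Nat.cast_sub (by omega : 1 ≤ m)]; ring
      simp only [pow_one, derivative_C_mul, derivative_X, derivative_C, mul_one, derivative_one,
        mul_zero, h1, h2]
      simp only [map_mul, map_sub, map_add, map_pow, map_one, map_ofNat, C_eq_natCast,
        Nat.cast_one, Nat.cast_pow]
      push_cast
      ring
  | (j + 2), hj =>
      have h1 : ((2 * m - 1 : ℕ) : K) = 2 * (m : K) - 1 := by
        push_cast [Nat.cast_sub (by omega : 1 ≤ 2 * m)]; ring
      have h2 : (((m - (j + 2)) ^ 2 : ℕ) : K) = ((m : K) - ((j : K) + 2)) ^ 2 := by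
        push_cast [Nat.cast_sub (by omega : j + 2 ≤ m)]; ring
      rw [derivative_C_mul_X_pow, show j + 2 - 1 = j + 1 from rfl, derivative_C_mul_X_pow,
        show j + 1 - 1 = j from rfl]
      rw [h1, h2]
      push_cast
      simp only [map_mul, map_sub, map_add, map_pow, map_one, map_ofNat, C_eq_natCast,
        Nat.cast_one, Nat.cast_pow, Nat.cast_ofNat]
      ring

lemma hassePoly_ode :
    X * (1 - X) * derivative (derivative (hassePoly m K)) + derivative (hassePoly m K)
      + C (((2 * m - 1 : ℕ) : K)) * X * derivative (hassePoly m K)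
    = C ((m : K) ^ 2) * hassePoly m K := by
  have key : ∀ j ∈ Finset.range (m + 1),
      X * (1 - X) * derivative (derivative (C ((m.choose j : K) ^ 2) * X ^ j))
        + derivative (C ((m.choose j : K) ^ 2) * X ^ j)
        + C (((2 * m - 1 : ℕ) : K)) * X * derivative (C ((m.choose j : K) ^ 2) * X ^ j)
      = C ((m.choose j : K) ^ 2 * ((j ^ 2 : ℕ) : K)) * X ^ (j - 1)
        + (C ((m : K) ^ 2 * (m.choose j : K) ^ 2) * X ^ j
           - C ((m.choose j : K) ^ 2 * (((m - j) ^ 2 : ℕ) : K)) * X ^ j) := fun j hj =>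
    hassePoly_term m _ _ j (by simpa [Nat.lt_succ_iff] using hj) rfl
  have reindex : ∑ j ∈ Finset.range (m + 1),
        C ((m.choose j : K) ^ 2 * ((j ^ 2 : ℕ) : K)) * X ^ (j - 1)
      = ∑ j ∈ Finset.range (m + 1),
        C ((m.choose j : K) ^ 2 * (((m - j) ^ 2 : ℕ) : K)) * X ^ j := by
    rw [Finset.sum_range_succ' _ m, Finset.sum_range_succ]
    norm_num
    apply Finset.sum_congr rfl
    intro j hj
    have hnat : (m.choose (j + 1) * (j + 1)) ^ 2 = (m.choose j * (m - j)) ^ 2 := by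
      rw [Nat.choose_succ_right_eq]
    have hcast : ((m.choose (j + 1) : K[X]) * ((j : K[X]) + 1)) ^ 2
        = ((m.choose j : K[X]) * ((m - j : ℕ) : K[X])) ^ 2 := by
      exact_mod_cast congrArg (fun n : ℕ => (n : K[X])) hnat
    rw [mul_pow, mul_pow] at hcast
    rw [hcast]
  rw [hassePoly, derivative_sum, derivative_sum, Finset.mul_sum, Finset.mul_sum, Finset.mul_sum,
    ← Finset.sum_add_distrib, ← Finset.sum_add_distrib, Finset.sum_congr rfl key,
    Finset.sum_add_distrib, Finset.sum_sub_distrib, reindex,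
    show ∀ a b : K[X], a + (b - a) = b from fun a b => by ring]
  apply Finset.sum_congr rfl
  intro j hj
  rw [C_mul, mul_assoc]

lemma hassePoly_ode_iter (n : ℕ) :
    ∃ a b d : K, X * (1 - X) * derivative^[n + 2] (hassePoly m K)
        + (C a + C b * X) * derivative^[n + 1] (hassePoly m K)
        + C d * derivative^[n] (hassePoly m K) = 0 := by
  induction n with
  | zero =>
      refine ⟨1, ((2 * m - 1 : ℕ) : K), -((m : K) ^ 2), ?_⟩
      have h := hassePoly_ode (K := K) m
      simp only [Function.iterate_succ, Function.iterate_zero, Function.comp_apply, id_eq,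
        map_neg, map_one]
      linear_combination h
  | succ n ih =>
      obtain ⟨a, b, d, h⟩ := ih
      refine ⟨a + 1, b - 2, b + d, ?_⟩
      have h' := congrArg derivative h
      simp only [derivative_add, derivative_mul, derivative_sub, derivative_X, derivative_one,
        derivative_C, derivative_zero, ← Function.iterate_succ_apply'] at h'
      simp only [map_add, map_sub, map_ofNat, map_one]
      linear_combination h'

lemma hassePoly_iter_eval_zero {lam : K} (h0 : eval lam (hassePoly m K) = 0)
    (h1 : eval lam (derivative (hassePoly m K)) = 0) (hlam : lam * (1 - lam) ≠ 0) :
    ∀ n, eval lam (derivative^[n] (hassePoly m K)) = 0 := by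
  have key : ∀ n, eval lam (derivative^[n] (hassePoly m K)) = 0 ∧
      eval lam (derivative^[n + 1] (hassePoly m K)) = 0 := by
    intro n
    induction n with
    | zero => exact ⟨by simpa using h0, by simpa using h1⟩
    | succ n ih =>
        obtain ⟨hn, hn1⟩ := ih
        refine ⟨hn1, ?_⟩
        obtain ⟨a, b, d, h⟩ := hassePoly_ode_iter (K := K) m n
        have heval := congrArg (eval lam) h
        simp only [eval_add, eval_mul, eval_sub, eval_X, eval_one, eval_C, eval_zero, hn, hn1,
          mul_zero, add_zero, zero_add] at heval
        exact (mul_eq_zero.mp heval).resolve_left hlam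
  exact fun n => (key n).1

lemma hassePoly_false {p : ℕ} (hp : p.Prime) [CharP K p] (hmp : m < p) {lam : K}
    (hall : ∀ n, eval lam (derivative^[n] (hassePoly m K)) = 0) : False := by
  have htay : taylor lam (hassePoly m K) = 0 := by
    ext n
    rw [coeff_zero]
    rcases le_or_gt n m with hn | hn
    · rw [taylor_coeff]
      have hfac : ((n.factorial : K)) ≠ 0 := by
        rw [Ne, CharP.cast_eq_zero_iff K p]
        intro hdvd
        exact absurd ((Nat.Prime.dvd_factorial hp).mp hdvd) (by omega)
      have h2 : (n.factorial : K) * eval lam (hasseDeriv n (hassePoly m K)) = 0 := by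
        have h3 : (n.factorial • hasseDeriv n) (hassePoly m K)
            = derivative^[n] (hassePoly m K) :=
          congrFun (Polynomial.factorial_smul_hasseDeriv (R := K) n) (hassePoly m K)
        have h4 := congrArg (eval lam) h3
        rw [hall n] at h4
        simpa [eval_smul, smul_eq_mul] using h4
      exact (mul_eq_zero.mp h2).resolve_left hfac
    · apply coeff_eq_zero_of_natDegree_lt
      rw [natDegree_taylor]
      exact lt_of_le_of_lt (hassePoly_natDegree_le m) hn
  refine hassePoly_ne_zero (K := K) m (taylor_injective lam ?_)
  rw [htay, map_zero]

lemma hassePoly_eval_one : eval 1 (hassePoly m K) = (((2 * m).choose m : ℕ) : K) := by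
  have hnat : (2 * m).choose m = ∑ j ∈ Finset.range (m + 1), m.choose j ^ 2 := by
    rw [two_mul, Nat.add_choose_eq,
      Finset.Nat.sum_antidiagonal_eq_sum_range_succ (fun i j => m.choose i * m.choose j)]
    apply Finset.sum_congr rfl
    intro j hj
    rw [Finset.mem_range, Nat.lt_succ_iff] at hj
    rw [Nat.choose_symm hj, sq]
  rw [hassePoly, hnat, Nat.cast_sum, eval_finset_sum]
  apply Finset.sum_congr rfl
  intro j _
  rw [eval_mul, eval_pow, eval_C, eval_X, one_pow, mul_one]
  push_cast
  ring

lemma hassePoly_separable {p : ℕ} (hp : p.Prime) (hodd : Odd p)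
    (K : Type*) [Field K] [IsAlgClosed K] [CharP K p] :
    (hassePoly ((p - 1) / 2) K).Separable := by
  classical
  set m := (p - 1) / 2 with hm
  have hp2 : 3 ≤ p := by
    rcases hodd with ⟨t, ht⟩
    have := hp.two_le
    omega
  have h2m : 2 * m = p - 1 := by
    rcases hodd with ⟨t, ht⟩
    omega
  have hmp : m < p := by omega
  rw [Polynomial.Separable]
  by_contra hcop
  have hgu : ¬ IsUnit (EuclideanDomain.gcd (hassePoly m K) (derivative (hassePoly m K))) := by
    intro hu
    exact hcop (EuclideanDomain.gcd_isUnit_iff.mp hu)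
  have hgne : EuclideanDomain.gcd (hassePoly m K) (derivative (hassePoly m K)) ≠ 0 := by
    intro h
    exact hassePoly_ne_zero (K := K) m (EuclideanDomain.gcd_eq_zero_iff.mp h).1
  have hdeg : (EuclideanDomain.gcd (hassePoly m K) (derivative (hassePoly m K))).degree ≠ 0 := by
    intro h
    exact hgu (isUnit_iff_degree_eq_zero.mpr h)
  obtain ⟨lam, hlam⟩ := IsAlgClosed.exists_root _ hdeg
  have h0 : eval lam (hassePoly m K) = 0 := by
    obtain ⟨q, hq⟩ := EuclideanDomain.gcd_dvd_left (hassePoly m K)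
      (derivative (hassePoly m K))
    rw [hq, eval_mul, hlam, zero_mul]
  have h1 : eval lam (derivative (hassePoly m K)) = 0 := by
    obtain ⟨q, hq⟩ := EuclideanDomain.gcd_dvd_right (hassePoly m K)
      (derivative (hassePoly m K))
    rw [hq, eval_mul, hlam, zero_mul]
  -- three cases on lam
  rcases eq_or_ne lam 0 with rfl | hl0
  · rw [← coeff_zero_eq_eval_zero, hassePoly_coeff, if_pos (Nat.zero_le m)] at h0
    simp at h0
  rcases eq_or_ne lam 1 with rfl | hl1
  · rw [hassePoly_eval_one] at h0
    rw [CharP.cast_eq_zero_iff K p] at h0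
    have hdvd : (2 * m).choose m ∣ (2 * m).factorial := by
      have hle : m ≤ 2 * m := by omega
      exact ⟨m.factorial * (2 * m - m).factorial, by
        rw [← Nat.choose_mul_factorial_mul_factorial hle]; ring⟩
    have hpf : p ∣ (2 * m).factorial := h0.trans hdvd
    have := (Nat.Prime.dvd_factorial hp).mp hpf
    omega
  have hlam' : lam * (1 - lam) ≠ 0 := by
    intro h
    rcases mul_eq_zero.mp h with h | h
    · exact hl0 h
    · exact hl1 (by linear_combination -h)
  exact hassePoly_false m hp hmp (hassePoly_iter_eval_zero m h0 h1 hlam')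

end aux

/-- Let `p` be an odd prime and `k` a field of characteristic `p`.  Then the polynomial
`∑_{i=0}^{(p−1)/2} C((p−1)/2, i)² X^{(p−1)/2−i}` in `k[X]` is separable. -/
theorem stmt7 (p : ℕ) (hp : p.Prime) (hodd : Odd p) (k : Type*) [Field k] [CharP k p] :
    (∑ i ∈ Finset.range ((p - 1) / 2 + 1),
        Polynomial.C ((((p - 1) / 2).choose i : k) ^ 2) *
          Polynomial.X ^ ((p - 1) / 2 - i)).Separable := by
  have hkey : (∑ i ∈ Finset.range ((p - 1) / 2 + 1),
      Polynomial.C ((((p - 1) / 2).choose i : k) ^ 2) * Polynomial.X ^ ((p - 1) / 2 - i))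
      = hassePoly ((p - 1) / 2) k := by
    rw [hassePoly, ← Finset.sum_range_reflect]
    apply Finset.sum_congr rfl
    intro j hj
    rw [Finset.mem_range, Nat.lt_succ_iff] at hj
    rw [show (p - 1) / 2 + 1 - 1 - j = (p - 1) / 2 - j from by omega, Nat.choose_symm hj,
      Nat.sub_sub_self hj]
  rw [hkey, ← Polynomial.separable_map (algebraMap k (AlgebraicClosure k))]
  have hmap : (hassePoly ((p - 1) / 2) k).map (algebraMap k (AlgebraicClosure k))
      = hassePoly ((p - 1) / 2) (AlgebraicClosure k) := by
    rw [hassePoly, hassePoly, Polynomial.map_sum]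
    apply Finset.sum_congr rfl
    intro j _
    rw [Polynomial.map_mul, Polynomial.map_pow, Polynomial.map_C, Polynomial.map_X]
    congr 1
    rw [map_pow, map_natCast]
  rw [hmap]
  exact hassePoly_separable hp hodd (AlgebraicClosure k)
end

section
/- Let p = 2 or p = 3 and let d be a positive integer. Then any two elements of Ω_d are related by the equivalence relation generated by the refinement relation; that is, for all E, E' in Ω_d there is a finite chain E = E₀, E₁, …, E_n = E' of elements of Ω_d such that for each i, either E_{i+1} is a refinement of E_i or E_i is a refinement of E_{i+1}. -/
/-- `Omega p d` is the set of multisets of integers summing to `d + 2` all of whose entries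
`e` satisfy `e ≥ 2` and `e ≢ 1 (mod p)`. -/
def Omega (p d : ℕ) : Set (Multiset ℕ) :=
  {E | E.sum = d + 2 ∧ ∀ e ∈ E, 2 ≤ e ∧ ¬ e ≡ 1 [MOD p]}

/-- `Refines E E'` means `E'` is a refinement of `E`: there is a multiset `g` of multisets
whose member-sums form `E` and whose multiset union (join) is `E'`. -/
def Refines (E E' : Multiset ℕ) : Prop :=
  ∃ g : Multiset (Multiset ℕ), g.map Multiset.sum = E ∧ g.sum = E'

lemma sum_mod_zero {m : ℕ} {E : Multiset ℕ} (h : ∀ e ∈ E, e % m = 0) : E.sum % m = 0 := by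
  induction E using Multiset.induction_on with
  | empty => simp
  | cons a s ih =>
    have ha : a % m = 0 := h a (Multiset.mem_cons_self a s)
    have hs : s.sum % m = 0 := ih (fun e he => h e (Multiset.mem_cons_of_mem he))
    rw [Multiset.sum_cons, Nat.add_mod, ha, hs]
    simp

/-- `{d+2}` coarsens everything in `Omega p d`. -/
lemma refines_total {s : ℕ} {E : Multiset ℕ} (h : E.sum = s) :
    Refines ({s} : Multiset ℕ) E := by
  exact ⟨{E}, by simp [h], by simp⟩

/-- For `p = 3` and `(d+2) % 3 = 1`, every element of `Omega 3 d` is connected to `{2, d}`. -/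
lemma conn3 (d : ℕ) (hd : 0 < d) (hcan : (d + 2) % 3 = 1)
    (E : Multiset ℕ) (hE : E ∈ Omega 3 d) :
    Relation.ReflTransGen
      (fun A B => A ∈ Omega 3 d ∧ B ∈ Omega 3 d ∧ (Refines A B ∨ Refines B A)) E
      ({2, d} : Multiset ℕ) := by
  obtain ⟨hsum, hmem⟩ := hE
  -- d % 3 = 2, hence d ≥ 2
  have hd2 : d % 3 = 2 := by omega
  have hdge : 2 ≤ d := by omega
  have hC : ({2, d} : Multiset ℕ) ∈ Omega 3 d := by
    constructor
    · simp; omega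
    · intro e he
      simp only [Multiset.insert_eq_cons, Multiset.mem_cons, Multiset.mem_singleton] at he
      rcases he with rfl | rfl <;> exact ⟨by omega, by simp [Nat.ModEq] <;> omega⟩
  -- find an element e₁ ≡ 2 mod 3 in E
  have hexists : ∃ e₁ ∈ E, e₁ % 3 = 2 := by
    by_contra hcon
    push_neg at hcon
    have h0 : ∀ e ∈ E, e % 3 = 0 := by
      intro e he
      have h1 : ¬ e ≡ 1 [MOD 3] := (hmem e he).2
      have h2 : e % 3 ≠ 2 := hcon e he
      simp only [Nat.ModEq] at h1
      omega
    have := sum_mod_zero h0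
    omega
  obtain ⟨e₁, he₁, he₁2⟩ := hexists
  obtain ⟨F, rfl⟩ := Multiset.exists_cons_of_mem he₁
  rw [Multiset.sum_cons] at hsum
  have he₁ge : 2 ≤ e₁ := (hmem e₁ (Multiset.mem_cons_self _ _)).1
  have hFsum : F.sum = d + 2 - e₁ := by omega
  have he₁lt : e₁ < d + 2 := by omega
  have hrest : (d + 2 - e₁) % 3 = 2 := by omega
  have hrestge : 2 ≤ d + 2 - e₁ := by omega
  -- A = {e₁, d+2-e₁}
  have hA : ({e₁, d + 2 - e₁} : Multiset ℕ) ∈ Omega 3 d := by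
    constructor
    · simp; omega
    · intro e he
      simp only [Multiset.insert_eq_cons, Multiset.mem_cons, Multiset.mem_singleton] at he
      rcases he with rfl | rfl <;> exact ⟨by omega, by simp [Nat.ModEq]; omega⟩
  have hEmem : (e₁ ::ₘ F) ∈ Omega 3 d := ⟨by rw [Multiset.sum_cons]; omega, hmem⟩
  have hAE : Refines ({e₁, d + 2 - e₁} : Multiset ℕ) (e₁ ::ₘ F) := by
    refine ⟨{{e₁}, F}, ?_, ?_⟩
    · simp [hFsum]
    · simp
  have step1 :
      Relation.ReflTransGen
        (fun A B => A ∈ Omega 3 d ∧ B ∈ Omega 3 d ∧ (Refines A B ∨ Refines B A))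
        (e₁ ::ₘ F) ({e₁, d + 2 - e₁} : Multiset ℕ) :=
    Relation.ReflTransGen.single ⟨hEmem, hA, Or.inr hAE⟩
  by_cases he₁eq : e₁ = 2
  · subst he₁eq
    have : d + 2 - 2 = d := by omega
    rw [this] at step1
    exact step1
  · -- e₁ ≥ 5; go through B = {2, e₁ - 2, d + 2 - e₁}
    have he₁5 : 5 ≤ e₁ := by omega
    have hB : ({2, e₁ - 2, d + 2 - e₁} : Multiset ℕ) ∈ Omega 3 d := by
      constructor
      · simp; omega
      · intro e he
        simp only [Multiset.insert_eq_cons, Multiset.mem_cons, Multiset.mem_singleton] at he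
        rcases he with rfl | rfl | rfl <;> exact ⟨by omega, by simp [Nat.ModEq] <;> omega⟩
    have hAB : Refines ({e₁, d + 2 - e₁} : Multiset ℕ)
        ({2, e₁ - 2, d + 2 - e₁} : Multiset ℕ) := by
      refine ⟨{{2, e₁ - 2}, {d + 2 - e₁}}, ?_, ?_⟩
      · have : 2 + (e₁ - 2) = e₁ := by omega
        simp [this]
      · simp
    have hCB : Refines ({2, d} : Multiset ℕ) ({2, e₁ - 2, d + 2 - e₁} : Multiset ℕ) := by
      refine ⟨{{2}, {e₁ - 2, d + 2 - e₁}}, ?_, ?_⟩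
      · have : e₁ - 2 + (d + 2 - e₁) = d := by omega
        simp [this]
      · simp
        exact Multiset.cons_swap _ _ _
    exact step1.trans
      (Relation.ReflTransGen.head ⟨hA, hB, Or.inl hAB⟩
        (Relation.ReflTransGen.single ⟨hB, hC, Or.inr hCB⟩))

/-- For `p = 2` or `p = 3` and `d ≥ 1`, any two elements of `Ω_d` are related by the
equivalence relation generated by refinement: there is a finite chain of elements of `Ω_d`
in which consecutive members are related by refinement in one direction or the other. -/
theorem stmt12 (p d : ℕ) (hp : p = 2 ∨ p = 3) (hd : 0 < d)
    (E E' : Multiset ℕ) (hE : E ∈ Omega p d) (hE' : E' ∈ Omega p d) :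
    Relation.ReflTransGen
      (fun A B => A ∈ Omega p d ∧ B ∈ Omega p d ∧ (Refines A B ∨ Refines B A)) E E' := by
  have hsymm : Symmetric
      (fun A B => A ∈ Omega p d ∧ B ∈ Omega p d ∧ (Refines A B ∨ Refines B A)) :=
    fun A B h => ⟨h.2.1, h.1, h.2.2.symm⟩
  by_cases hcan : (d + 2) % p = 1
  · rcases hp with rfl | rfl
    · -- p = 2 : Omega is empty since d+2 is odd
      exfalso
      obtain ⟨hsum, hmem⟩ := hE
      have h0 : ∀ e ∈ E, e % 2 = 0 := by
        intro e he
        have h1 : ¬ e ≡ 1 [MOD 2] := (hmem e he).2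
        simp only [Nat.ModEq] at h1
        omega
      have := sum_mod_zero h0
      omega
    · exact (conn3 d hd hcan E hE).trans
        (by haveI : Std.Symm (fun A B : Multiset ℕ => A ∈ Omega 3 d ∧ B ∈ Omega 3 d ∧ (Refines A B ∨ Refines B A)) := ⟨fun a b h => hsymm h⟩; exact Relation.ReflTransGen.symmetric.symm _ _ (conn3 d hd hcan E' hE'))
  · -- {d+2} ∈ Omega p d, and it coarsens both E and E'
    have hC : ({d + 2} : Multiset ℕ) ∈ Omega p d := by
      constructor
      · simp
      · intro e he
        simp only [Multiset.mem_singleton] at he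
        subst he
        refine ⟨by omega, ?_⟩
        simp only [Nat.ModEq]
        have h1p : 1 % p = 1 := by
          rcases hp with rfl | rfl <;> norm_num
        rw [h1p]
        exact hcan
    exact Relation.ReflTransGen.head ⟨hE, hC, Or.inr (refines_total hE.1)⟩
      (Relation.ReflTransGen.single ⟨hC, hE', Or.inl (refines_total hE'.1)⟩)
end

section
/- Let p = 5 and let d ≥ 7 be an integer. Then any two elements of Ω_d are joined by a finite chain E = E₀, E₁, …, E_n = E' of elements of Ω_d in which, for each i, either E_{i+1} is obtained from E_i by an elementary move or E_i is obtained from E_{i+1} by an elementary move. -/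
/-- `ElemMove p E F` means `F` is obtained from `E` by replacing one entry `e` by parts
`f₁, …, f_m` summing to `e`, each `≥ 2` and `≢ 1 (mod p)`, according to one of the
elementary moves (a)–(e). -/
def ElemMove (p : ℕ) (E F : Multiset ℕ) : Prop :=
  ∃ e ∈ E, ∃ parts : Multiset ℕ,
    F = E.erase e + parts ∧ parts.sum = e ∧
    (∀ f ∈ parts, 2 ≤ f ∧ ¬ f ≡ 1 [MOD p]) ∧
    ((∃ f₁ f₂ : ℕ, parts = {f₁, f₂} ∧
        (f₁ - 1) / p + (f₂ - 1) / p < (e - 1) / p) ∨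
      (Multiset.card parts = 3 ∧ ∀ f ∈ parts, f ≡ (p + 1) / 2 [MOD p]) ∨
      (Multiset.card parts = 3 ∧ (p - 1) ∈ parts) ∨
      (∃ n : ℕ, 1 ≤ n ∧ n ≤ p - 1 ∧ ¬ p ∣ n * ((n + 1) * p - n ^ 2) ∧
        e = (n + 1) * (p - n + 1) ∧ parts = Multiset.replicate (p - n + 1) (n + 1)) ∨
      (p = 5 ∧ ((e = 9 ∧ parts = {3, 2, 2, 2}) ∨ (e = 10 ∧ parts = {3, 3, 2, 2}))))

abbrev Rmv (d : ℕ) (A B : Multiset ℕ) : Prop :=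
  A ∈ Omega 5 d ∧ B ∈ Omega 5 d ∧ (ElemMove 5 A B ∨ ElemMove 5 B A)

lemma move_preserves {d : ℕ} {E F : Multiset ℕ} (hE : E ∈ Omega 5 d)
    (h : ElemMove 5 E F) : F ∈ Omega 5 d := by
  obtain ⟨e, he, parts, hF, hsum, hparts, -⟩ := h
  obtain ⟨hs, hm⟩ := hE
  have h1 : e ::ₘ E.erase e = E := Multiset.cons_erase he
  have h2 : e + (E.erase e).sum = E.sum := by rw [← h1]; simp
  constructor
  · rw [hF, Multiset.sum_add, hsum]; omega
  · intro f hf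
    rcases Multiset.mem_add.1 (hF ▸ hf) with hf' | hf'
    · exact hm f (Multiset.mem_of_mem_erase hf')
    · exact hparts f hf'

lemma mk_move {e : ℕ} (rest parts : Multiset ℕ)
    (hsum : parts.sum = e)
    (hparts : ∀ f ∈ parts, 2 ≤ f ∧ ¬ f ≡ 1 [MOD 5])
    (hdisj : (∃ f₁ f₂ : ℕ, parts = {f₁, f₂} ∧
        (f₁ - 1) / 5 + (f₂ - 1) / 5 < (e - 1) / 5) ∨
      (Multiset.card parts = 3 ∧ ∀ f ∈ parts, f ≡ (5 + 1) / 2 [MOD 5]) ∨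
      (Multiset.card parts = 3 ∧ (5 - 1) ∈ parts) ∨
      (∃ n : ℕ, 1 ≤ n ∧ n ≤ 5 - 1 ∧ ¬ 5 ∣ n * ((n + 1) * 5 - n ^ 2) ∧
        e = (n + 1) * (5 - n + 1) ∧ parts = Multiset.replicate (5 - n + 1) (n + 1)) ∨
      (5 = 5 ∧ ((e = 9 ∧ parts = {3, 2, 2, 2}) ∨ (e = 10 ∧ parts = {3, 3, 2, 2})))) :
    ElemMove 5 (e ::ₘ rest) (parts + rest) :=
  ⟨e, Multiset.mem_cons_self e rest, parts,
    by rw [Multiset.erase_cons_head, add_comm], hsum, hparts, hdisj⟩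

lemma swap_step (d e : ℕ) (A B rest : Multiset ℕ)
    (hE : A + rest ∈ Omega 5 d) (hAsum : A.sum = e) (he2 : 2 ≤ e) (he1 : ¬ e ≡ 1 [MOD 5])
    (hA : ElemMove 5 (e ::ₘ rest) (A + rest)) (hB : ElemMove 5 (e ::ₘ rest) (B + rest)) :
    (B + rest) ∈ Omega 5 d ∧ Relation.ReflTransGen (Rmv d) (A + rest) (B + rest) := by
  have hM : (e ::ₘ rest) ∈ Omega 5 d := by
    obtain ⟨hs, hm⟩ := hE
    rw [Multiset.sum_add] at hs
    refine ⟨by simp [Multiset.sum_cons]; omega, ?_⟩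
    intro f hf
    rcases Multiset.mem_cons.1 hf with rfl | hf
    · exact ⟨he2, he1⟩
    · exact hm f (Multiset.mem_add.2 (Or.inr hf))
  have hBΩ := move_preserves hM hB
  exact ⟨hBΩ, .trans (.single ⟨hE, hM, Or.inr hA⟩) (.single ⟨hM, hBΩ, Or.inl hB⟩)⟩

lemma split_step (d e : ℕ) (rest parts : Multiset ℕ) (hE : (e ::ₘ rest) ∈ Omega 5 d)
    (h : ElemMove 5 (e ::ₘ rest) (parts + rest)) :
    (parts + rest) ∈ Omega 5 d ∧ Relation.ReflTransGen (Rmv d) (e ::ₘ rest) (parts + rest) :=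
  have hP := move_preserves hE h
  ⟨hP, .single ⟨hE, hP, Or.inl h⟩⟩

section Moves
variable (rest : Multiset ℕ)

lemma mv10_55 : ElemMove 5 (10 ::ₘ rest) ({5,5} + rest) :=
  mk_move rest _ (by decide) (by decide) (Or.inl ⟨5,5, rfl, by norm_num⟩)

lemma mv10_rep2 : ElemMove 5 (10 ::ₘ rest) (Multiset.replicate 5 2 + rest) :=
  mk_move rest _ (by decide) (by decide)
    (Or.inr <| Or.inr <| Or.inr <| Or.inl ⟨1, by norm_num, by norm_num, by decide, by norm_num, by decide⟩)

lemma mv7_52 : ElemMove 5 (7 ::ₘ rest) ({5,2} + rest) :=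
  mk_move rest _ (by decide) (by decide) (Or.inl ⟨5,2, rfl, by norm_num⟩)

lemma mv7_34 : ElemMove 5 (7 ::ₘ rest) ({3,4} + rest) :=
  mk_move rest _ (by decide) (by decide) (Or.inl ⟨3,4, rfl, by norm_num⟩)

lemma mv7_43 : ElemMove 5 (7 ::ₘ rest) ({4,3} + rest) :=
  mk_move rest _ (by decide) (by decide) (Or.inl ⟨4,3, rfl, by norm_num⟩)

lemma mv8_53 : ElemMove 5 (8 ::ₘ rest) ({5,3} + rest) :=
  mk_move rest _ (by decide) (by decide) (Or.inl ⟨5,3, rfl, by norm_num⟩)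

lemma mv8_44 : ElemMove 5 (8 ::ₘ rest) ({4,4} + rest) :=
  mk_move rest _ (by decide) (by decide) (Or.inl ⟨4,4, rfl, by norm_num⟩)

lemma mv8_422 : ElemMove 5 (8 ::ₘ rest) ({4,2,2} + rest) :=
  mk_move rest _ (by decide) (by decide) (Or.inr <| Or.inr <| Or.inl ⟨by decide, by decide⟩)

lemma mv9_54 : ElemMove 5 (9 ::ₘ rest) ({5,4} + rest) :=
  mk_move rest _ (by decide) (by decide) (Or.inl ⟨5,4, rfl, by norm_num⟩)

lemma mv9_333 : ElemMove 5 (9 ::ₘ rest) ({3,3,3} + rest) :=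
  mk_move rest _ (by decide) (by decide) (Or.inr <| Or.inl ⟨by decide, by decide⟩)

lemma mv9_432 : ElemMove 5 (9 ::ₘ rest) ({4,3,2} + rest) :=
  mk_move rest _ (by decide) (by decide) (Or.inr <| Or.inr <| Or.inl ⟨by decide, by decide⟩)

lemma mv9_3222 : ElemMove 5 (9 ::ₘ rest) ({3,2,2,2} + rest) :=
  mk_move rest _ (by decide) (by decide) (Or.inr <| Or.inr <| Or.inr <| Or.inr ⟨rfl, Or.inl ⟨rfl, rfl⟩⟩)

lemma mv10_442 : ElemMove 5 (10 ::ₘ rest) ({4,4,2} + rest) :=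
  mk_move rest _ (by decide) (by decide) (Or.inr <| Or.inr <| Or.inl ⟨by decide, by decide⟩)

lemma mv10_433 : ElemMove 5 (10 ::ₘ rest) ({4,3,3} + rest) :=
  mk_move rest _ (by decide) (by decide) (Or.inr <| Or.inr <| Or.inl ⟨by decide, by decide⟩)

lemma mv10_3322 : ElemMove 5 (10 ::ₘ rest) ({3,3,2,2} + rest) :=
  mk_move rest _ (by decide) (by decide) (Or.inr <| Or.inr <| Or.inr <| Or.inr ⟨rfl, Or.inr ⟨rfl, rfl⟩⟩)

lemma mv12_444 : ElemMove 5 (12 ::ₘ rest) ({4,4,4} + rest) :=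
  mk_move rest _ (by decide) (by decide)
    (Or.inr <| Or.inr <| Or.inr <| Or.inl ⟨3, by norm_num, by norm_num, by decide, by norm_num, by decide⟩)

lemma mv12_3333 : ElemMove 5 (12 ::ₘ rest) ({3,3,3,3} + rest) :=
  mk_move rest _ (by decide) (by decide)
    (Or.inr <| Or.inr <| Or.inr <| Or.inl ⟨2, by norm_num, by norm_num, by decide, by norm_num, by decide⟩)

end Moves

lemma stageA (d : ℕ) : ∀ (n : ℕ) (E : Multiset ℕ), (E.map (fun x => x * x)).sum < n →
    E ∈ Omega 5 d → ∃ F ∈ Omega 5 d, (∀ f ∈ F, f ≤ 5) ∧ Relation.ReflTransGen (Rmv d) E F := by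
  intro n
  induction n with
  | zero => intro E h; omega
  | succ n ih =>
    intro E hμ hE
    by_cases hbig : ∀ f ∈ E, f ≤ 5
    · exact ⟨E, hE, hbig, .refl⟩
    · push_neg at hbig
      obtain ⟨e, heE, he5⟩ := hbig
      have he1 : e % 5 ≠ 1 := by
        have := (hE.2 e heE).2
        simpa [Nat.ModEq] using this
      obtain ⟨f₁, f₂, hf⟩ : ∃ f₁ f₂ : ℕ, f₁ + f₂ = e ∧ 2 ≤ f₁ ∧ 2 ≤ f₂ ∧ f₁ % 5 ≠ 1 ∧
          f₂ % 5 ≠ 1 ∧ (f₁ - 1) / 5 + (f₂ - 1) / 5 < (e - 1) / 5 := by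
        refine ⟨if e % 5 = 0 then 5 else e % 5, e - (if e % 5 = 0 then 5 else e % 5), ?_⟩
        split_ifs with h0 <;> omega
      have hrest : E = e ::ₘ E.erase e := (Multiset.cons_erase heE).symm
      have hmv : ElemMove 5 (e ::ₘ E.erase e) ({f₁, f₂} + E.erase e) := by
        refine mk_move _ _ ?_ ?_ (Or.inl ⟨f₁, f₂, rfl, hf.2.2.2.2.2⟩)
        · simp [hf.1]
        · intro f hfm
          rcases Multiset.mem_cons.1 hfm with rfl | hfm
          · exact ⟨hf.2.1, by simpa [Nat.ModEq] using hf.2.2.2.1⟩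
          · rcases Multiset.mem_singleton.1 hfm with rfl
            exact ⟨hf.2.2.1, by simpa [Nat.ModEq] using hf.2.2.2.2.1⟩
      obtain ⟨hΩ', hch⟩ := split_step d e (E.erase e) {f₁, f₂} (hrest ▸ hE) hmv
      have hμ' : (({f₁, f₂} + E.erase e).map (fun x => x * x)).sum < n := by
        have h1 : (E.map (fun x => x * x)).sum
            = e * e + ((E.erase e).map (fun x => x * x)).sum := by
          rw [hrest]; simp
        have h2 : (({f₁, f₂} + E.erase e).map (fun x => x * x)).sum
            = f₁ * f₁ + f₂ * f₂ + ((E.erase e).map (fun x => x * x)).sum := by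
          simp [add_assoc]
        have h3 : f₁ * f₁ + f₂ * f₂ < e * e := by nlinarith [hf.1, hf.2.1, hf.2.2.1]
        omega
      obtain ⟨F, hF, hF5, hch2⟩ := ih _ hμ' hΩ'
      refine ⟨F, hF, hF5, ?_⟩
      rw [hrest]
      exact hch.trans hch2

lemma count_le_in {a : ℕ} {s : Multiset ℕ} (x : ℕ) :
    Multiset.count a (s.erase x) ≤ Multiset.count a s :=
  Multiset.count_le_of_le a (Multiset.erase_le x s)

lemma stageB (d : ℕ) (hd : 7 ≤ d) : ∀ (n : ℕ) (E : Multiset ℕ), Multiset.count 5 E < n →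
    E ∈ Omega 5 d → (∀ f ∈ E, f ≤ 5) →
    ∃ F ∈ Omega 5 d, (∀ f ∈ F, f = 2 ∨ f = 3 ∨ f = 4) ∧ Relation.ReflTransGen (Rmv d) E F := by
  intro n
  induction n with
  | zero => intro E h; omega
  | succ n ih =>
    intro E hc hE hle
    by_cases h5 : 5 ∈ E
    swap
    · refine ⟨E, hE, fun f hf => ?_, .refl⟩
      have h2 := (hE.2 f hf).1
      have h3 := hle f hf
      have h4 : f ≠ 5 := fun h => h5 (h ▸ hf)
      omega
    · have hcpos : 1 ≤ Multiset.count 5 E := Multiset.one_le_count_iff_mem.2 h5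
      have hE1 : E = 5 ::ₘ E.erase 5 := (Multiset.cons_erase h5).symm
      set E₁ := E.erase 5 with hE₁def
      have hmem1 : ∀ f ∈ E₁, f ∈ E := fun f hf => Multiset.mem_of_mem_erase hf
      by_cases h55 : 5 ∈ E₁
      · -- two fives
        set rest := E₁.erase 5 with hrdef
        have hE2 : E = 5 ::ₘ 5 ::ₘ rest := by
          rw [hE1, (Multiset.cons_erase h55).symm]
        have hEeq : E = ({5,5} : Multiset ℕ) + rest := by rw [hE2]; simp
        obtain ⟨hFΩ, hch⟩ := swap_step d 10 {5,5} (Multiset.replicate 5 2) rest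
          (hEeq ▸ hE) (by decide) (by norm_num) (by decide) (mv10_55 rest) (mv10_rep2 rest)
        have hcount : Multiset.count 5 (Multiset.replicate 5 2 + rest) < n := by
          have h1 : Multiset.count 5 (Multiset.replicate 5 2 + rest)
              = Multiset.count 5 rest := by simp
          have h2 : Multiset.count 5 E = Multiset.count 5 rest + 2 := by
            rw [hE2]; simp
          omega
        have hle' : ∀ f ∈ Multiset.replicate 5 2 + rest, f ≤ 5 := by
          intro f hf
          rcases Multiset.mem_add.1 hf with hf | hf
          · rw [Multiset.eq_of_mem_replicate hf]; norm_num
          · exact hle f (hE2 ▸ Multiset.mem_cons_of_mem (Multiset.mem_cons_of_mem hf))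
        obtain ⟨F, hF, hF234, hch2⟩ := ih _ hcount hFΩ hle'
        exact ⟨F, hF, hF234, (hEeq ▸ hch.trans hch2 : _)⟩
      · -- one five
        have hc5 : Multiset.count 5 E₁ = 0 := Multiset.count_eq_zero.2 h55
        have hE₁ne : E₁ ≠ 0 := by
          intro h0
          have := hE.1
          rw [hE1, h0] at this
          simp at this
          omega
        obtain ⟨x, hx⟩ := Multiset.exists_mem_of_ne_zero hE₁ne
        have hx5 : x ≠ 5 := fun h => h55 (h ▸ hx)
        have hxE : x ∈ E := hmem1 x hx
        have hx234 : x = 2 ∨ x = 3 ∨ x = 4 := by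
          have h2 := (hE.2 x hxE).1
          have h3 := hle x hxE
          omega
        set rest := E₁.erase x with hrdef
        have hE2 : E = 5 ::ₘ x ::ₘ rest := by
          rw [hE1, (Multiset.cons_erase hx).symm]
        have hcrest : Multiset.count 5 rest = 0 :=
          Nat.le_zero.1 (hc5 ▸ count_le_in x)
        have hlerest : ∀ f ∈ rest, f ≤ 5 := fun f hf =>
          hle f (hE2 ▸ Multiset.mem_cons_of_mem (Multiset.mem_cons_of_mem hf))
        -- helper to finish given e A B and move lemmas
        have finish : ∀ (e : ℕ) (A B : Multiset ℕ), E = A + rest → A.sum = e → 2 ≤ e →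
            ¬ e ≡ 1 [MOD 5] →
            ElemMove 5 (e ::ₘ rest) (A + rest) → ElemMove 5 (e ::ₘ rest) (B + rest) →
            (∀ f ∈ B, f = 2 ∨ f = 3 ∨ f = 4) →
            ∃ F ∈ Omega 5 d, (∀ f ∈ F, f = 2 ∨ f = 3 ∨ f = 4) ∧
              Relation.ReflTransGen (Rmv d) E F := by
          intro e A B hEeq hAs he2 he1 hA hB hB234
          obtain ⟨hFΩ, hch⟩ := swap_step d e A B rest (hEeq ▸ hE) hAs he2 he1 hA hB
          have hcount : Multiset.count 5 (B + rest) < n := by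
            have h1 : Multiset.count 5 (B + rest) = Multiset.count 5 B + Multiset.count 5 rest :=
              Multiset.count_add 5 B rest
            have h2 : Multiset.count 5 B = 0 := by
              refine Multiset.count_eq_zero.2 fun h => ?_
              rcases hB234 5 h with h | h | h <;> omega
            omega
          have hle' : ∀ f ∈ B + rest, f ≤ 5 := by
            intro f hf
            rcases Multiset.mem_add.1 hf with hf | hf
            · rcases hB234 f hf with h | h | h <;> omega
            · exact hlerest f hf
          obtain ⟨F, hF, hF234, hch2⟩ := ih _ hcount hFΩ hle'
          exact ⟨F, hF, hF234, (hEeq ▸ hch.trans hch2 : _)⟩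
        rcases hx234 with rfl | rfl | rfl
        · exact finish 7 {5,2} {3,4} (by rw [hE2]; simp) (by decide) (by norm_num)
            (by decide) (mv7_52 rest) (mv7_34 rest) (by decide)
        · exact finish 8 {5,3} {4,4} (by rw [hE2]; simp) (by decide) (by norm_num)
            (by decide) (mv8_53 rest) (mv8_44 rest) (by decide)
        · exact finish 9 {5,4} {3,3,3} (by rw [hE2]; simp) (by decide) (by norm_num)
            (by decide) (mv9_54 rest) (mv9_333 rest) (by decide)

lemma mem_of_sum_pos {s : Multiset ℕ} (h : 0 < s.sum) : ∃ x, x ∈ s := by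
  refine Multiset.exists_mem_of_ne_zero fun h0 => ?_
  rw [h0] at h
  simp at h

lemma stageC (d : ℕ) (hd : 7 ≤ d) : ∀ (n : ℕ) (E : Multiset ℕ), Multiset.count 4 E < n →
    E ∈ Omega 5 d → (∀ f ∈ E, f = 2 ∨ f = 3 ∨ f = 4) →
    ∃ F ∈ Omega 5 d, (∀ f ∈ F, f = 2 ∨ f = 3) ∧ Relation.ReflTransGen (Rmv d) E F := by
  intro n
  induction n with
  | zero => intro E h; omega
  | succ n ih =>
    intro E hc hE hle
    by_cases h4 : 4 ∈ E
    swap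
    · refine ⟨E, hE, fun f hf => ?_, .refl⟩
      have h3 := hle f hf
      have h5 : f ≠ 4 := fun h => h4 (h ▸ hf)
      omega
    · have hsum : E.sum = d + 2 := hE.1
      have hcpos : 1 ≤ Multiset.count 4 E := Multiset.one_le_count_iff_mem.2 h4
      have hE1 : E = 4 ::ₘ E.erase 4 := (Multiset.cons_erase h4).symm
      set E₁ := E.erase 4 with hE₁def
      have hmem1 : ∀ f ∈ E₁, f ∈ E := fun f hf => Multiset.mem_of_mem_erase hf
      have hsum1 : E₁.sum = d - 2 := by
        have : E.sum = 4 + E₁.sum := by rw [hE1]; simp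
        omega
      -- generic finisher for a single swap E = A + rest → B + rest
      have finish : ∀ (e : ℕ) (A B rest : Multiset ℕ), E = A + rest → A.sum = e → 2 ≤ e →
          ¬ e ≡ 1 [MOD 5] →
          ElemMove 5 (e ::ₘ rest) (A + rest) → ElemMove 5 (e ::ₘ rest) (B + rest) →
          (∀ f ∈ B, f = 2 ∨ f = 3 ∨ f = 4) → (∀ f ∈ rest, f = 2 ∨ f = 3 ∨ f = 4) →
          Multiset.count 4 (B + rest) < n →
          ∃ F ∈ Omega 5 d, (∀ f ∈ F, f = 2 ∨ f = 3) ∧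
            Relation.ReflTransGen (Rmv d) E F := by
        intro e A B rest hEeq hAs he2 he1 hA hB hB234 hr234 hcount
        obtain ⟨hFΩ, hch⟩ := swap_step d e A B rest (hEeq ▸ hE) hAs he2 he1 hA hB
        have hle' : ∀ f ∈ B + rest, f = 2 ∨ f = 3 ∨ f = 4 := by
          intro f hf
          rcases Multiset.mem_add.1 hf with hf | hf
          · exact hB234 f hf
          · exact hr234 f hf
        obtain ⟨F, hF, hF23, hch2⟩ := ih _ hcount hFΩ hle'
        exact ⟨F, hF, hF23, (hEeq ▸ hch.trans hch2 : _)⟩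
      by_cases h44 : 4 ∈ E₁
      · have hE2 : E₁ = 4 ::ₘ E₁.erase 4 := (Multiset.cons_erase h44).symm
        set E₂ := E₁.erase 4 with hE₂def
        by_cases h444 : 4 ∈ E₂
        · -- three fours
          have hE3 : E₂ = 4 ::ₘ E₂.erase 4 := (Multiset.cons_erase h444).symm
          set rest := E₂.erase 4 with hrdef
          have hEeq : E = ({4,4,4} : Multiset ℕ) + rest := by
            rw [hE1, hE2, hE3]; simp
          refine finish 12 {4,4,4} {3,3,3,3} rest hEeq (by decide) (by norm_num) (by decide)
            (mv12_444 rest) (mv12_3333 rest) (by decide)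
            (fun f hf => hle f (by rw [hEeq]; exact Multiset.mem_add.2 (Or.inr hf))) ?_
          have h1 : Multiset.count 4 E = Multiset.count 4 rest + 3 := by
            rw [hE1, hE2, hE3]; simp
          have h2 : Multiset.count 4 (({3,3,3,3} : Multiset ℕ) + rest)
              = Multiset.count 4 rest := by simp
          omega
        · -- exactly two fours
          have hc2 : Multiset.count 4 E₂ = 0 := Multiset.count_eq_zero.2 h444
          have hsum2 : E₂.sum = d - 6 := by
            have : E₁.sum = 4 + E₂.sum := by rw [hE2]; simp
            omega
          have hne : ∃ x, x ∈ E₂ := mem_of_sum_pos (by omega)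
          obtain ⟨x, hx⟩ := hne
          have hxE : x ∈ E := hmem1 x (hE2 ▸ Multiset.mem_cons_of_mem hx)
          have hx4 : x ≠ 4 := fun h => h444 (h ▸ hx)
          have hx23 : x = 2 ∨ x = 3 := by rcases hle x hxE with h | h | h <;> omega
          set rest := E₂.erase x with hrdef
          have hE3 : E₂ = x ::ₘ rest := (Multiset.cons_erase hx).symm
          have hcr : Multiset.count 4 rest = 0 := Nat.le_zero.1 (hc2 ▸ count_le_in x)
          have hr234 : ∀ f ∈ rest, f = 2 ∨ f = 3 ∨ f = 4 := fun f hf =>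
            hle f (hmem1 f (hE2 ▸ Multiset.mem_cons_of_mem (hE3 ▸ Multiset.mem_cons_of_mem hf)))
          rcases hx23 with rfl | rfl
          · -- 4,4,2
            have hEeq : E = ({4,4,2} : Multiset ℕ) + rest := by
              rw [hE1, hE2, hE3]; simp
            refine finish 10 {4,4,2} {3,3,2,2} rest hEeq (by decide) (by norm_num) (by decide)
              (mv10_442 rest) (mv10_3322 rest) (by decide) hr234 ?_
            have h2 : Multiset.count 4 (({3,3,2,2} : Multiset ℕ) + rest)
                = Multiset.count 4 rest := by simp
            omega
          · -- 4,4,3 : two swaps through {5,2} then {3,3,3}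
            have hEeq : E = ({4,3} : Multiset ℕ) + (4 ::ₘ rest) := by
              rw [hE1, hE2, hE3]
              simp only [Multiset.insert_eq_cons, Multiset.cons_add, Multiset.singleton_add]
              rw [Multiset.cons_swap 3 4]
            obtain ⟨hM1Ω, hch1⟩ := swap_step d 7 {4,3} {5,2} (4 ::ₘ rest)
              (hEeq ▸ hE) (by decide) (by norm_num) (by decide) (mv7_43 _) (mv7_52 _)
            have hM1eq : ({5,2} : Multiset ℕ) + (4 ::ₘ rest)
                = ({5,4} : Multiset ℕ) + (2 ::ₘ rest) := by
              simp only [Multiset.insert_eq_cons, Multiset.cons_add, Multiset.singleton_add]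
              rw [Multiset.cons_swap 2 4]
            obtain ⟨hM2Ω, hch2⟩ := swap_step d 9 {5,4} {3,3,3} (2 ::ₘ rest)
              (hM1eq ▸ hM1Ω) (by decide) (by norm_num) (by decide) (mv9_54 _) (mv9_333 _)
            have hcount : Multiset.count 4 (({3,3,3} : Multiset ℕ) + (2 ::ₘ rest)) < n := by
              have h2 : Multiset.count 4 (({3,3,3} : Multiset ℕ) + (2 ::ₘ rest))
                  = Multiset.count 4 rest := by simp
              omega
            have hle' : ∀ f ∈ ({3,3,3} : Multiset ℕ) + (2 ::ₘ rest), f = 2 ∨ f = 3 ∨ f = 4 := by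
              intro f hf
              rcases Multiset.mem_add.1 hf with hf | hf
              · rcases Multiset.mem_cons.1 hf with rfl|hf
                · norm_num
                · rcases Multiset.mem_cons.1 hf with rfl|hf
                  · norm_num
                  · rcases Multiset.mem_singleton.1 hf with rfl; norm_num
              · rcases Multiset.mem_cons.1 hf with rfl | hf
                · norm_num
                · exact hr234 f hf
            obtain ⟨F, hF, hF23, hch3⟩ := ih _ hcount hM2Ω hle'
            refine ⟨F, hF, hF23, ?_⟩
            rw [hEeq]
            exact (hch1.trans (hM1eq ▸ hch2)).trans hch3
      · -- exactly one four
        have hc1 : Multiset.count 4 E₁ = 0 := Multiset.count_eq_zero.2 h44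
        have h123 : ∀ f ∈ E₁, f = 2 ∨ f = 3 := by
          intro f hf
          have h5 : f ≠ 4 := fun h => h44 (h ▸ hf)
          rcases hle f (hmem1 f hf) with h | h | h <;> omega
        by_cases h3 : 3 ∈ E₁
        · set E₂ := E₁.erase 3 with hE₂def
          have hE2 : E₁ = 3 ::ₘ E₂ := (Multiset.cons_erase h3).symm
          have h123' : ∀ f ∈ E₂, f = 2 ∨ f = 3 := fun f hf =>
            h123 f (Multiset.mem_of_mem_erase hf)
          by_cases h2 : 2 ∈ E₂
          · -- 4,3,2 → 3,3,3
            set rest := E₂.erase 2 with hrdef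
            have hE3 : E₂ = 2 ::ₘ rest := (Multiset.cons_erase h2).symm
            have hEeq : E = ({4,3,2} : Multiset ℕ) + rest := by
              rw [hE1, hE2, hE3]; simp
            refine finish 9 {4,3,2} {3,3,3} rest hEeq (by decide) (by norm_num) (by decide)
              (mv9_432 rest) (mv9_333 rest) (by decide)
              (fun f hf => by rcases h123' f (hE3 ▸ Multiset.mem_cons_of_mem hf) with h|h <;> omega) ?_
            have hcr : Multiset.count 4 rest = 0 := by
              refine Multiset.count_eq_zero.2 fun h => ?_
              rcases h123' 4 (hE3 ▸ Multiset.mem_cons_of_mem h) with h|h <;> omega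
            have h2' : Multiset.count 4 (({3,3,3} : Multiset ℕ) + rest)
                = Multiset.count 4 rest := by simp
            omega
          · -- no 2 in E₂ : all threes; need a second 3
            by_cases h33 : 3 ∈ E₂
            · set rest := E₂.erase 3 with hrdef
              have hE3 : E₂ = 3 ::ₘ rest := (Multiset.cons_erase h33).symm
              have hEeq : E = ({4,3,3} : Multiset ℕ) + rest := by
                rw [hE1, hE2, hE3]; simp
              refine finish 10 {4,3,3} {3,3,2,2} rest hEeq (by decide) (by norm_num) (by decide)
                (mv10_433 rest) (mv10_3322 rest) (by decide)
                (fun f hf => by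
                  rcases h123 f (hE2 ▸ Multiset.mem_cons_of_mem (hE3 ▸ Multiset.mem_cons_of_mem hf))
                    with h|h <;> omega) ?_
              have hcr : Multiset.count 4 rest = 0 := by
                refine Multiset.count_eq_zero.2 fun h => ?_
                rcases h123 4 (hE2 ▸ Multiset.mem_cons_of_mem (hE3 ▸ Multiset.mem_cons_of_mem h))
                  with h|h <;> omega
              have h2' : Multiset.count 4 (({3,3,2,2} : Multiset ℕ) + rest)
                  = Multiset.count 4 rest := by simp
              omega
            · -- E₂ has no 2 and no 3 → E₂ = 0 → sum too small
              exfalso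
              have hz : E₂ = 0 := by
                by_contra hne
                obtain ⟨x, hx⟩ := Multiset.exists_mem_of_ne_zero hne
                rcases h123' x hx with rfl | rfl
                · exact h2 hx
                · exact h33 hx
              have : E₁.sum = 3 := by rw [hE2, hz]; simp
              omega
        · -- no 3 in E₁ : all twos, need three of them
          have hall2 : ∀ f ∈ E₁, f = 2 := by
            intro f hf
            rcases h123 f hf with h | h
            · exact h
            · exact absurd (h ▸ hf) h3
          have hs1 : 5 ≤ E₁.sum := by omega
          obtain ⟨a, ha⟩ := mem_of_sum_pos (s := E₁) (by omega)
          have ha2 : a = 2 := hall2 a ha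
          subst ha2
          set E₂ := E₁.erase 2 with hE₂def
          have hE2 : E₁ = 2 ::ₘ E₂ := (Multiset.cons_erase ha).symm
          have hsum2 : E₂.sum = d - 4 := by
            have : E₁.sum = 2 + E₂.sum := by rw [hE2]; simp
            omega
          have hall2' : ∀ f ∈ E₂, f = 2 := fun f hf => hall2 f (Multiset.mem_of_mem_erase hf)
          obtain ⟨b, hb⟩ := mem_of_sum_pos (s := E₂) (by omega)
          have hb2 : b = 2 := hall2' b hb
          subst hb2
          set E₃ := E₂.erase 2 with hE₃def
          have hE3 : E₂ = 2 ::ₘ E₃ := (Multiset.cons_erase hb).symm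
          have hsum3 : E₃.sum = d - 6 := by
            have : E₂.sum = 2 + E₃.sum := by rw [hE3]; simp
            omega
          have hall2'' : ∀ f ∈ E₃, f = 2 := fun f hf => hall2' f (Multiset.mem_of_mem_erase hf)
          obtain ⟨c, hc'⟩ := mem_of_sum_pos (s := E₃) (by omega)
          have hcc2 : c = 2 := hall2'' c hc'
          subst hcc2
          set rest := E₃.erase 2 with hrdef
          have hE4 : E₃ = 2 ::ₘ rest := (Multiset.cons_erase hc').symm
          have hall2''' : ∀ f ∈ rest, f = 2 := fun f hf => hall2'' f (Multiset.mem_of_mem_erase hf)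
          -- E = 4::2::2::2::rest ;  {4,2,2} + (2::rest) → {4,4} + (2::rest) = {4,4,2}+rest → {3,3,2,2}+rest
          have hEeq : E = ({4,2,2} : Multiset ℕ) + (2 ::ₘ rest) := by
            rw [hE1, hE2, hE3, hE4]
            simp
            rw [Multiset.cons_swap 2 4]
          obtain ⟨hM1Ω, hch1⟩ := swap_step d 8 {4,2,2} {4,4} (2 ::ₘ rest)
            (hEeq ▸ hE) (by decide) (by norm_num) (by decide) (mv8_422 _) (mv8_44 _)
          have hM1eq : ({4,4} : Multiset ℕ) + (2 ::ₘ rest)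
              = ({4,4,2} : Multiset ℕ) + rest := by
            simp
            rw [Multiset.cons_swap 2 4, Multiset.cons_swap 2 4]
          obtain ⟨hM2Ω, hch2⟩ := swap_step d 10 {4,4,2} {3,3,2,2} rest
            (hM1eq ▸ hM1Ω) (by decide) (by norm_num) (by decide) (mv10_442 _) (mv10_3322 _)
          have hcount : Multiset.count 4 (({3,3,2,2} : Multiset ℕ) + rest) < n := by
            have h2' : Multiset.count 4 (({3,3,2,2} : Multiset ℕ) + rest)
                = Multiset.count 4 rest := by simp
            have hcr : Multiset.count 4 rest = 0 := by
              refine Multiset.count_eq_zero.2 fun h => ?_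
              have := hall2''' 4 h
              omega
            omega
          have hle' : ∀ f ∈ ({3,3,2,2} : Multiset ℕ) + rest, f = 2 ∨ f = 3 ∨ f = 4 := by
            intro f hf
            rcases Multiset.mem_add.1 hf with hf | hf
            · fin_cases hf <;> norm_num
            · have := hall2''' f hf
              omega
          obtain ⟨F, hF, hF23, hch3⟩ := ih _ hcount hM2Ω hle'
          refine ⟨F, hF, hF23, ?_⟩
          rw [hEeq]
          exact (hch1.trans (hM1eq ▸ hch2)).trans hch3

lemma stageD (d : ℕ) (hd : 7 ≤ d) : ∀ (n : ℕ) (E : Multiset ℕ), Multiset.count 3 E < n →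
    E ∈ Omega 5 d → (∀ f ∈ E, f = 2 ∨ f = 3) →
    ∃ F ∈ Omega 5 d, (∀ f ∈ F, f = 2 ∨ f = 3) ∧ Multiset.count 3 F ≤ 1 ∧
      Relation.ReflTransGen (Rmv d) E F := by
  intro n
  induction n with
  | zero => intro E h; omega
  | succ n ih =>
    intro E hc hE hle
    by_cases hc1 : Multiset.count 3 E ≤ 1
    · exact ⟨E, hE, hle, hc1, .refl⟩
    · push_neg at hc1
      have h3 : 3 ∈ E := by
        rw [← Multiset.one_le_count_iff_mem]; omega
      have hE1 : E = 3 ::ₘ E.erase 3 := (Multiset.cons_erase h3).symm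
      set E₁ := E.erase 3 with hE₁def
      have h33 : 3 ∈ E₁ := by
        have : Multiset.count 3 E₁ = Multiset.count 3 E - 1 := by
          rw [hE₁def, Multiset.count_erase_self]
        rw [← Multiset.one_le_count_iff_mem]; omega
      have hE2 : E₁ = 3 ::ₘ E₁.erase 3 := (Multiset.cons_erase h33).symm
      set E₂ := E₁.erase 3 with hE₂def
      have hcE2 : Multiset.count 3 E₂ = Multiset.count 3 E - 2 := by
        rw [hE₂def, Multiset.count_erase_self, hE₁def, Multiset.count_erase_self]; omega
      have hmem2 : ∀ f ∈ E₂, f ∈ E := fun f hf =>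
        Multiset.mem_of_mem_erase (Multiset.mem_of_mem_erase hf)
      by_cases h333 : 3 ∈ E₂
      · -- three threes : {3,3,3} ↔ 9 ↔ {3,2,2,2}
        set rest := E₂.erase 3 with hrdef
        have hE3 : E₂ = 3 ::ₘ rest := (Multiset.cons_erase h333).symm
        have hEeq : E = ({3,3,3} : Multiset ℕ) + rest := by
          rw [hE1, hE2, hE3]; simp
        obtain ⟨hFΩ, hch⟩ := swap_step d 9 {3,3,3} {3,2,2,2} rest
          (hEeq ▸ hE) (by decide) (by norm_num) (by decide) (mv9_333 _) (mv9_3222 _)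
        have hcount : Multiset.count 3 (({3,2,2,2} : Multiset ℕ) + rest) < n := by
          have h1 : Multiset.count 3 (({3,2,2,2} : Multiset ℕ) + rest)
              = Multiset.count 3 rest + 1 := by simp
          have h2 : Multiset.count 3 rest = Multiset.count 3 E - 3 := by
            rw [hrdef, Multiset.count_erase_self]; omega
          omega
        have hle' : ∀ f ∈ ({3,2,2,2} : Multiset ℕ) + rest, f = 2 ∨ f = 3 := by
          intro f hf
          rcases Multiset.mem_add.1 hf with hf | hf
          · fin_cases hf <;> norm_num
          · exact hle f (hmem2 f (hE3 ▸ Multiset.mem_cons_of_mem hf))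
        obtain ⟨F, hF, hF23, hF3, hch2⟩ := ih _ hcount hFΩ hle'
        exact ⟨F, hF, hF23, hF3, (hEeq ▸ hch.trans hch2 : _)⟩
      · -- exactly two threes : need two 2's
        have hall2 : ∀ f ∈ E₂, f = 2 := by
          intro f hf
          rcases hle f (hmem2 f hf) with h | h
          · exact h
          · exact absurd (h ▸ hf) h333
        have hsum2 : E₂.sum = d - 4 := by
          have h1 : E.sum = d + 2 := hE.1
          have h2 : E.sum = 3 + (3 + E₂.sum) := by rw [hE1, hE2]; simp
          omega
        obtain ⟨a, ha⟩ := mem_of_sum_pos (s := E₂) (by omega)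
        have ha2 : a = 2 := hall2 a ha
        subst ha2
        set E₃ := E₂.erase 2 with hE₃def
        have hE3 : E₂ = 2 ::ₘ E₃ := (Multiset.cons_erase ha).symm
        have hsum3 : E₃.sum = d - 6 := by
          have : E₂.sum = 2 + E₃.sum := by rw [hE3]; simp
          omega
        have hall2' : ∀ f ∈ E₃, f = 2 := fun f hf => hall2 f (Multiset.mem_of_mem_erase hf)
        obtain ⟨b, hb⟩ := mem_of_sum_pos (s := E₃) (by omega)
        have hb2 : b = 2 := hall2' b hb
        subst hb2
        set rest := E₃.erase 2 with hrdef
        have hE4 : E₃ = 2 ::ₘ rest := (Multiset.cons_erase hb).symm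
        have hall2'' : ∀ f ∈ rest, f = 2 := fun f hf => hall2' f (Multiset.mem_of_mem_erase hf)
        have hEeq : E = ({3,3,2,2} : Multiset ℕ) + rest := by
          rw [hE1, hE2, hE3, hE4]; simp
        obtain ⟨hFΩ, hch⟩ := swap_step d 10 {3,3,2,2} (Multiset.replicate 5 2) rest
          (hEeq ▸ hE) (by decide) (by norm_num) (by decide) (mv10_3322 _) (mv10_rep2 _)
        have hcount : Multiset.count 3 (Multiset.replicate 5 2 + rest) < n := by
          have h1 : Multiset.count 3 (Multiset.replicate 5 2 + rest)
              = Multiset.count 3 rest := by simp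
          have h2 : Multiset.count 3 rest = 0 := by
            refine Multiset.count_eq_zero.2 fun h => ?_
            have := hall2'' 3 h
            omega
          omega
        have hle' : ∀ f ∈ Multiset.replicate 5 2 + rest, f = 2 ∨ f = 3 := by
          intro f hf
          rcases Multiset.mem_add.1 hf with hf | hf
          · exact Or.inl (Multiset.eq_of_mem_replicate hf)
          · exact Or.inl (hall2'' f hf)
        obtain ⟨F, hF, hF23, hF3, hch2⟩ := ih _ hcount hFΩ hle'
        exact ⟨F, hF, hF23, hF3, (hEeq ▸ hch.trans hch2 : _)⟩

lemma canon_rep (E : Multiset ℕ) (h : ∀ f ∈ E, f = 2 ∨ f = 3) :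
    E = Multiset.replicate (Multiset.count 2 E) 2 + Multiset.replicate (Multiset.count 3 E) 3 := by
  rw [Multiset.ext]
  intro a
  rw [Multiset.count_add, Multiset.count_replicate, Multiset.count_replicate]
  by_cases h2 : a = 2
  · subst h2; norm_num
  · by_cases h3 : a = 3
    · subst h3; norm_num
    · rw [if_neg (fun h => h2 h.symm), if_neg (fun h => h3 h.symm)]
      refine Multiset.count_eq_zero.2 fun ha => ?_
      rcases h a ha with h' | h'
      · exact h2 h'
      · exact h3 h'

lemma canon_eq (E F : Multiset ℕ) (hE : ∀ f ∈ E, f = 2 ∨ f = 3) (hF : ∀ f ∈ F, f = 2 ∨ f = 3)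
    (h3E : Multiset.count 3 E ≤ 1) (h3F : Multiset.count 3 F ≤ 1) (hs : E.sum = F.sum) :
    E = F := by
  have hsE : E.sum = 2 * Multiset.count 2 E + 3 * Multiset.count 3 E := by
    conv_lhs => rw [canon_rep E hE]
    simp [Multiset.sum_replicate, mul_comm]
  have hsF : F.sum = 2 * Multiset.count 2 F + 3 * Multiset.count 3 F := by
    conv_lhs => rw [canon_rep F hF]
    simp [Multiset.sum_replicate, mul_comm]
  have h3 : Multiset.count 3 E = Multiset.count 3 F := by omega
  have h2 : Multiset.count 2 E = Multiset.count 2 F := by omega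
  rw [canon_rep E hE, canon_rep F hF, h2, h3]

lemma reduce (d : ℕ) (hd : 7 ≤ d) (E : Multiset ℕ) (hE : E ∈ Omega 5 d) :
    ∃ F ∈ Omega 5 d, (∀ f ∈ F, f = 2 ∨ f = 3) ∧ Multiset.count 3 F ≤ 1 ∧
      Relation.ReflTransGen (Rmv d) E F := by
  obtain ⟨F₁, hF₁, h₁, ch₁⟩ := stageA d ((E.map (fun x => x * x)).sum + 1) E (by omega) hE
  obtain ⟨F₂, hF₂, h₂, ch₂⟩ := stageB d hd (Multiset.count 5 F₁ + 1) F₁ (by omega) hF₁ h₁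
  obtain ⟨F₃, hF₃, h₃, ch₃⟩ := stageC d hd (Multiset.count 4 F₂ + 1) F₂ (by omega) hF₂ h₂
  obtain ⟨F₄, hF₄, h₄, h₄', ch₄⟩ := stageD d hd (Multiset.count 3 F₃ + 1) F₃ (by omega) hF₃ h₃
  exact ⟨F₄, hF₄, h₄, h₄', ((ch₁.trans ch₂).trans ch₃).trans ch₄⟩

/-- For `p = 5` and `d ≥ 7`, any two elements of `Ω_d` are joined by a finite chain of
elements of `Ω_d` in which consecutive members are related by an elementary move (in one
direction or the other). -/
theorem stmt14 (d : ℕ) (hd : 7 ≤ d)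
    (E E' : Multiset ℕ) (hE : E ∈ Omega 5 d) (hE' : E' ∈ Omega 5 d) :
    Relation.ReflTransGen
      (fun A B => A ∈ Omega 5 d ∧ B ∈ Omega 5 d ∧ (ElemMove 5 A B ∨ ElemMove 5 B A))
      E E' := by
  obtain ⟨F, hF, hF23, hF3, ch⟩ := reduce d hd E hE
  obtain ⟨F', hF', hF23', hF3', ch'⟩ := reduce d hd E' hE'
  have hFF : F = F' := canon_eq F F' hF23 hF23' hF3 hF3' (by rw [hF.1, hF'.1])
  have hsym : Symmetric (Rmv d) := fun A B h => ⟨h.2.1, h.1, h.2.2.symm⟩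
  exact ch.trans (hFF ▸ (letI : Std.Symm (Rmv d) := ⟨hsym⟩; Std.Symm.symm (r := Relation.ReflTransGen (Rmv d)) _ _ ch'))
end

section
/- Let p ≥ 3 be a prime and let d be a positive integer with d + 2 ≢ 1 (mod p). Then any two elements of Ω_d each of which contains at least one entry greater than or equal to p are joined by a finite chain E = E₀, E₁, …, E_n = E' of elements of Ω_d in which, for each i, either E_{i+1} is obtained from E_i by an elementary move of type (a), (b), (c) or (d), or E_i is obtained from E_{i+1} by such a move. -/
/-- `ElemMoveABCD p E F` means `F` is obtained from `E` by replacing one entry `e` by parts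
`f₁, …, f_m` summing to `e`, each `≥ 2` and `≢ 1 (mod p)`, according to one of the
elementary moves (a)–(d). -/
def ElemMoveABCD (p : ℕ) (E F : Multiset ℕ) : Prop :=
  ∃ e ∈ E, ∃ parts : Multiset ℕ,
    F = E.erase e + parts ∧ parts.sum = e ∧
    (∀ f ∈ parts, 2 ≤ f ∧ ¬ f ≡ 1 [MOD p]) ∧
    ((∃ f₁ f₂ : ℕ, parts = {f₁, f₂} ∧
        (f₁ - 1) / p + (f₂ - 1) / p < (e - 1) / p) ∨
      (Multiset.card parts = 3 ∧ ∀ f ∈ parts, f ≡ (p + 1) / 2 [MOD p]) ∨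
      (Multiset.card parts = 3 ∧ (p - 1) ∈ parts) ∨
      (∃ n : ℕ, 1 ≤ n ∧ n ≤ p - 1 ∧ ¬ p ∣ n * ((n + 1) * p - n ^ 2) ∧
        e = (n + 1) * (p - n + 1) ∧ parts = Multiset.replicate (p - n + 1) (n + 1)))

set_option linter.all false

namespace Stmt15Aux

lemma dm {p : ℕ} (a r : ℕ) (hp : 0 < p) (h : r < p) :
    (a * p + r) / p = a ∧ (a * p + r) % p = r := by
  constructor
  · rw [add_comm, Nat.add_mul_div_right _ _ hp, Nat.div_eq_of_lt h, zero_add]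
  · rw [add_comm, Nat.add_mul_mod_self_right, Nat.mod_eq_of_lt h]

lemma modeq_one_iff {p e : ℕ} (he : 1 ≤ e) : e ≡ 1 [MOD p] ↔ p ∣ e - 1 := by
  constructor
  · intro h; exact (Nat.modEq_iff_dvd' he).mp h.symm
  · intro h; exact ((Nat.modEq_iff_dvd' he).mpr h).symm

lemma good_pack {p : ℕ} (hp : 3 ≤ p) {e a r : ℕ} (he : e = a * p + r + 1)
    (h1 : 0 < r) (h2 : r < p) :
    (2 ≤ e ∧ ¬ e ≡ 1 [MOD p]) ∧ (e - 1) / p = a ∧ (e - 1) % p = r := by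
  have hp0 : 0 < p := by omega
  have hd := dm (p := p) a r hp0 h2
  have he1 : e - 1 = a * p + r := by omega
  refine ⟨⟨by omega, ?_⟩, by rw [he1]; exact hd.1, by rw [he1]; exact hd.2⟩
  rw [modeq_one_iff (by omega), he1]
  intro hdvd
  have hpr : p ∣ r := (Nat.dvd_add_right (dvd_mul_left p a)).mp hdvd
  exact absurd (Nat.le_of_dvd h1 hpr) (by omega)

lemma repr_of_good {p e : ℕ} (hp : 3 ≤ p) (h2 : 2 ≤ e) (h1 : ¬ e ≡ 1 [MOD p]) :
    ∃ a r, e = a * p + r + 1 ∧ 0 < r ∧ r < p ∧ (e - 1) / p = a ∧ (e - 1) % p = r := by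
  have hp0 : 0 < p := by omega
  refine ⟨(e-1)/p, (e-1)%p, ?_, ?_, Nat.mod_lt _ hp0, rfl, rfl⟩
  · have h := Nat.div_add_mod (e - 1) p
    have h2 : p * ((e-1)/p) = ((e-1)/p) * p := Nat.mul_comm _ _
    omega
  · rcases Nat.eq_zero_or_pos ((e-1) % p) with h | h
    · exact absurd ((modeq_one_iff (by omega)).mpr (Nat.dvd_of_mod_eq_zero h)) h1
    · exact h

lemma good_p {p : ℕ} (hp : 3 ≤ p) : 2 ≤ p ∧ ¬ p ≡ 1 [MOD p] := by
  refine ⟨by omega, ?_⟩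
  show ¬ p % p = 1 % p
  rw [Nat.mod_self, Nat.mod_eq_of_lt (by omega)]
  omega

lemma good_pm1 {p : ℕ} (hp : 3 ≤ p) : 2 ≤ p - 1 ∧ ¬ (p - 1) ≡ 1 [MOD p] := by
  refine ⟨by omega, ?_⟩
  show ¬ (p - 1) % p = 1 % p
  rw [Nat.mod_eq_of_lt (by omega), Nat.mod_eq_of_lt (by omega)]
  omega

lemma add_pair (s : Multiset ℕ) (a b : ℕ) :
    s + ({a, b} : Multiset ℕ) = a ::ₘ b ::ₘ s := by
  rw [add_comm, Multiset.insert_eq_cons, Multiset.cons_add, Multiset.singleton_add]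

lemma add_triple (s : Multiset ℕ) (a b c : ℕ) :
    s + ({a, b, c} : Multiset ℕ) = a ::ₘ b ::ₘ c ::ₘ s := by
  rw [add_comm, Multiset.insert_eq_cons, Multiset.insert_eq_cons,
    Multiset.cons_add, Multiset.cons_add, Multiset.singleton_add]

def S (p d : ℕ) (A B : Multiset ℕ) : Prop :=
  A ∈ Omega p d ∧ B ∈ Omega p d ∧ (ElemMoveABCD p A B ∨ ElemMoveABCD p B A)

lemma rtg_symm {α : Type*} {r : α → α → Prop} (hsym : ∀ a b, r a b → r b a) {a b : α}
    (h : Relation.ReflTransGen r a b) : Relation.ReflTransGen r b a := by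
  induction h with
  | refl => exact .refl
  | tail _ hstep ihh => exact Relation.ReflTransGen.trans (.single (hsym _ _ hstep)) ihh

lemma S_symm {p d : ℕ} : ∀ A B, S p d A B → S p d B A :=
  fun _ _ h => ⟨h.2.1, h.1, h.2.2.symm⟩

lemma key (p d : ℕ) (hp3 : 3 ≤ p) (hdmod : ¬ d + 2 ≡ 1 [MOD p]) :
    ∀ k E, Multiset.card E = k → E ∈ Omega p d → (∃ e ∈ E, p ≤ e) →
    Relation.ReflTransGen (S p d) E ({d + 2} : Multiset ℕ) := by
  intro k
  induction k using Nat.strong_induction_on with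
  | _ k ih =>
  intro E hcard hE hbig
  obtain ⟨hsumE, hgoodE⟩ := hE
  rcases k with _ | k
  · rw [Multiset.card_eq_zero] at hcard
    subst hcard
    simp at hsumE
  rcases k with _ | k1
  · rw [Multiset.card_eq_one] at hcard
    obtain ⟨x, rfl⟩ := hcard
    rw [Multiset.sum_singleton] at hsumE
    subst hsumE
    exact .refl
  -- k = k1 + 2 ≥ 2
  by_cases hc1 : ∃ x ∈ E, ∃ y ∈ E.erase x, p ≤ (x - 1) % p + (y - 1) % p
  · -- CASE 1 : direct merge
    obtain ⟨x, hx, y, hy, hxy⟩ := hc1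
    obtain ⟨rest, rfl⟩ : ∃ rest, E = x ::ₘ y ::ₘ rest :=
      ⟨(E.erase x).erase y, by rw [Multiset.cons_erase hy, Multiset.cons_erase hx]⟩
    simp only [Multiset.sum_cons] at hsumE
    simp only [Multiset.card_cons] at hcard
    have hgx := hgoodE x (Multiset.mem_cons_self _ _)
    have hgy := hgoodE y (Multiset.mem_cons_of_mem (Multiset.mem_cons_self _ _))
    obtain ⟨ax, rx, hxe, hrx0, hrxp, hxdiv, hxmod⟩ := repr_of_good hp3 hgx.1 hgx.2
    obtain ⟨ay, ry, hye, hry0, hryp, hydiv, hymod⟩ := repr_of_good hp3 hgy.1 hgy.2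
    rw [hxmod, hymod] at hxy
    have hring : (ax + ay + 1) * p = ax * p + ay * p + p := by ring
    have hMrepr : x + y = (ax + ay + 1) * p + (rx + ry + 1 - p) + 1 := by omega
    have hgM := good_pack hp3 hMrepr (by omega) (by omega)
    have hEΩ : (x ::ₘ y ::ₘ rest) ∈ Omega p d :=
      ⟨by simp only [Multiset.sum_cons]; omega, hgoodE⟩
    have hMΩ : ((x + y) ::ₘ rest) ∈ Omega p d := by
      refine ⟨by simp only [Multiset.sum_cons]; omega, ?_⟩
      intro z hz
      rcases Multiset.mem_cons.mp hz with rfl | hz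
      · exact hgM.1
      · exact hgoodE z (Multiset.mem_cons_of_mem (Multiset.mem_cons_of_mem hz))
    have hstep : S p d (x ::ₘ y ::ₘ rest) ((x + y) ::ₘ rest) := by
      refine ⟨hEΩ, hMΩ, Or.inr ?_⟩
      refine ⟨x + y, Multiset.mem_cons_self _ _, {x, y}, ?_, by simp, ?_, ?_⟩
      · rw [Multiset.erase_cons_head, add_pair]
      · intro f hf
        simp only [Multiset.insert_eq_cons, Multiset.mem_cons, Multiset.mem_singleton] at hf
        rcases hf with rfl | rfl
        · exact hgx
        · exact hgy
      · left
        refine ⟨x, y, rfl, ?_⟩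
        rw [hxdiv, hydiv]
        have h1 : x + y - 1 = (ax + ay + 1) * p + (rx + ry + 1 - p) := by omega
        rw [h1, (dm _ _ (by omega) (by omega)).1]
        omega
    refine Relation.ReflTransGen.head hstep (ih (k1 + 1) (by omega) _ ?_ hMΩ ?_)
    · simp only [Multiset.card_cons]; omega
    · exact ⟨x + y, Multiset.mem_cons_self _ _, by omega⟩
  · -- CASE 2 : no direct merge possible
    push_neg at hc1
    obtain ⟨b, hbE, hbp⟩ := hbig
    have hgb := hgoodE b hbE
    obtain ⟨ab, rb, hbe, hrb0, hrbp, hbdiv, hbmod⟩ := repr_of_good hp3 hgb.1 hgb.2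
    have hrest_pos : ∃ f, f ∈ E.erase b := by
      apply Multiset.card_pos_iff_exists_mem.mp
      rw [Multiset.card_erase_of_mem hbE, hcard]
      exact Nat.succ_pos _
    obtain ⟨f0, hf0⟩ := hrest_pos
    have hab1 : 1 ≤ ab := by
      by_contra hab
      have hg0 := hgoodE f0 (Multiset.mem_of_mem_erase hf0)
      obtain ⟨a0, r0, h0e, hr00, hr0p, _, h0mod⟩ := repr_of_good hp3 hg0.1 hg0.2
      have h := hc1 b hbE f0 hf0
      rw [hbmod, h0mod] at h
      have hz : ab * p = 0 := by
        have : ab = 0 := by omega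
        rw [this, Nat.zero_mul]
      omega
    by_cases hc2a : ∃ y ∈ E.erase b, (b - 1) % p + (y - 1) % p + 2 ≤ p
    · -- CASE 2a : split off p-1 from b then triple merge with f
      clear hf0
      obtain ⟨f, hfEb, hf2a⟩ := hc2a
      obtain ⟨rest, rfl⟩ : ∃ rest, E = b ::ₘ f ::ₘ rest :=
        ⟨(E.erase b).erase f, by rw [Multiset.cons_erase hfEb, Multiset.cons_erase hbE]⟩
      simp only [Multiset.sum_cons] at hsumE
      simp only [Multiset.card_cons] at hcard
      have hgf := hgoodE f (Multiset.mem_cons_of_mem (Multiset.mem_cons_self _ _))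
      obtain ⟨af, rf, hfe, hrf0, hrfp, hfdiv, hfmod⟩ := repr_of_good hp3 hgf.1 hgf.2
      rw [hbmod, hfmod] at hf2a
      obtain ⟨ab', rfl⟩ : ∃ t, ab = t + 1 := ⟨ab - 1, by omega⟩
      have hring : (ab' + 1) * p = ab' * p + p := by ring
      have hgB2 := good_pack (p := p) hp3 (rfl : ab' * p + (rb + 1) + 1 = ab' * p + (rb + 1) + 1)
        (by omega) (by omega)
      have hgpm1 := good_pm1 hp3
      have hpm1div : (p - 1 - 1) / p = 0 := Nat.div_eq_of_lt (by omega)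
      have hring2 : (ab' + 1 + af) * p = ab' * p + af * p + p := by ring
      have hMrepr : b + f = (ab' + 1 + af) * p + (rb + rf + 1) + 1 := by omega
      have hgM := good_pack hp3 hMrepr (by omega) (by omega)
      set B2 := ab' * p + (rb + 1) + 1 with hB2def
      have hEΩ : (b ::ₘ f ::ₘ rest) ∈ Omega p d :=
        ⟨by simp only [Multiset.sum_cons]; omega, hgoodE⟩
      have hE1Ω : ((p - 1) ::ₘ B2 ::ₘ f ::ₘ rest) ∈ Omega p d := by
        refine ⟨by simp only [Multiset.sum_cons]; omega, ?_⟩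
        intro z hz
        rcases Multiset.mem_cons.mp hz with rfl | hz
        · exact hgpm1
        rcases Multiset.mem_cons.mp hz with rfl | hz
        · exact hgB2.1
        rcases Multiset.mem_cons.mp hz with rfl | hz
        · exact hgf
        · exact hgoodE z (Multiset.mem_cons_of_mem (Multiset.mem_cons_of_mem hz))
      have hE2Ω : ((b + f) ::ₘ rest) ∈ Omega p d := by
        refine ⟨by simp only [Multiset.sum_cons]; omega, ?_⟩
        intro z hz
        rcases Multiset.mem_cons.mp hz with rfl | hz
        · exact hgM.1
        · exact hgoodE z (Multiset.mem_cons_of_mem (Multiset.mem_cons_of_mem hz))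
      have hstep1 : S p d (b ::ₘ f ::ₘ rest) ((p - 1) ::ₘ B2 ::ₘ f ::ₘ rest) := by
        refine ⟨hEΩ, hE1Ω, Or.inl ?_⟩
        refine ⟨b, Multiset.mem_cons_self _ _, {p - 1, B2}, ?_, ?_, ?_, ?_⟩
        · rw [Multiset.erase_cons_head, add_pair]
        · show (p - 1) + B2 = b
          omega
        · intro z hz
          simp only [Multiset.insert_eq_cons, Multiset.mem_cons, Multiset.mem_singleton] at hz
          rcases hz with rfl | rfl
          · exact hgpm1
          · exact hgB2.1
        · left
          refine ⟨p - 1, B2, rfl, ?_⟩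
          rw [hpm1div, hgB2.2.1, hbdiv]
          omega
      have hstep2 : S p d ((p - 1) ::ₘ B2 ::ₘ f ::ₘ rest) ((b + f) ::ₘ rest) := by
        refine ⟨hE1Ω, hE2Ω, Or.inr ?_⟩
        refine ⟨b + f, Multiset.mem_cons_self _ _, {p - 1, B2, f}, ?_, ?_, ?_, ?_⟩
        · rw [Multiset.erase_cons_head, add_triple]
        · show (p - 1) + (B2 + f) = b + f
          omega
        · intro z hz
          simp only [Multiset.insert_eq_cons, Multiset.mem_cons, Multiset.mem_singleton] at hz
          rcases hz with rfl | rfl | rfl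
          · exact hgpm1
          · exact hgB2.1
          · exact hgf
        · right; right; left
          constructor
          · simp
          · simp
      refine Relation.ReflTransGen.head hstep1
        (Relation.ReflTransGen.head hstep2 (ih (k1 + 1) (by omega) _ ?_ hE2Ω ?_))
      · simp only [Multiset.card_cons]; omega
      · exact ⟨b + f, Multiset.mem_cons_self _ _, by omega⟩
    · -- CASE 2b
      push_neg at hc2a
      have hres : ∀ y ∈ E.erase b, (y - 1) % p + rb + 1 = p := by
        intro y hy
        have h1 := hc1 b hbE y hy
        have h2 := hc2a y hy
        rw [hbmod] at h1 h2
        omega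
      rcases Nat.eq_zero_or_pos k1 with hk1 | hk1
      · -- k = 2 : contradiction with d + 2 ≢ 1 mod p
        exfalso
        subst hk1
        obtain ⟨rest, rfl⟩ : ∃ rest, E = b ::ₘ f0 ::ₘ rest :=
          ⟨(E.erase b).erase f0, by rw [Multiset.cons_erase hf0, Multiset.cons_erase hbE]⟩
        simp only [Multiset.card_cons] at hcard
        have hrest0 : rest = 0 := by
          rw [← Multiset.card_eq_zero]; omega
        subst hrest0
        simp only [Multiset.sum_cons, Multiset.sum_zero, add_zero] at hsumE
        have hgf := hgoodE f0 (Multiset.mem_cons_of_mem (Multiset.mem_cons_self _ _))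
        obtain ⟨af, rf, hfe, hrf0, hrfp, hfdiv, hfmod⟩ := repr_of_good hp3 hgf.1 hgf.2
        have hr := hres f0 (by rw [Multiset.erase_cons_head]; exact Multiset.mem_cons_self _ _)
        rw [hfmod] at hr
        apply hdmod
        show (d + 2) % p = 1 % p
        have hring : (ab + af + 1) * p = ab * p + af * p + p := by ring
        have hd2 : d + 2 = (ab + af + 1) * p + 1 := by omega
        rw [hd2, (dm _ _ (by omega) (by omega)).2, Nat.mod_eq_of_lt (by omega)]
      · -- k ≥ 3
        obtain ⟨rest1, rfl⟩ : ∃ r1, E = b ::ₘ f0 ::ₘ r1 :=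
          ⟨(E.erase b).erase f0, by rw [Multiset.cons_erase hf0, Multiset.cons_erase hbE]⟩
        have hrest1_pos : 0 < Multiset.card rest1 := by
          simp only [Multiset.card_cons] at hcard; omega
        obtain ⟨g, hg⟩ := Multiset.card_pos_iff_exists_mem.mp hrest1_pos
        obtain ⟨rest, rfl⟩ : ∃ r2, rest1 = g ::ₘ r2 := ⟨rest1.erase g, (Multiset.cons_erase hg).symm⟩
        simp only [Multiset.sum_cons] at hsumE
        simp only [Multiset.card_cons] at hcard
        have hgf := hgoodE f0 (Multiset.mem_cons_of_mem (Multiset.mem_cons_self _ _))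
        obtain ⟨af, rf, hfe, hrf0, hrfp, hfdiv, hfmod⟩ := repr_of_good hp3 hgf.1 hgf.2
        have hgg := hgoodE g
          (Multiset.mem_cons_of_mem (Multiset.mem_cons_of_mem (Multiset.mem_cons_self _ _)))
        obtain ⟨ag, rg, hge, hrg0, hrgp, hgdiv, hgmod⟩ := repr_of_good hp3 hgg.1 hgg.2
        have hresf : rf + rb + 1 = p := by
          have h := hres f0 (by rw [Multiset.erase_cons_head]; exact Multiset.mem_cons_self _ _)
          rw [hfmod] at h; exact h
        have hresg : rg + rb + 1 = p := by
          have h := hres g (by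
            rw [Multiset.erase_cons_head]
            exact Multiset.mem_cons_of_mem (Multiset.mem_cons_self _ _))
          rw [hgmod] at h; exact h
        have hfg : rf + rg < p := by
          have h := hc1 f0 (Multiset.mem_cons_of_mem (Multiset.mem_cons_self _ _)) g (by
            rw [Multiset.cons_swap, Multiset.erase_cons_head]
            exact Multiset.mem_cons_of_mem (Multiset.mem_cons_self _ _))
          rw [hfmod, hgmod] at h
          omega
        have hrgrf : rg = rf := by omega
        obtain ⟨ab', rfl⟩ : ∃ t, ab = t + 1 := ⟨ab - 1, by omega⟩
        have hring : (ab' + 1) * p = ab' * p + p := by ring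
        by_cases h2s : 2 * rf + 2 ≤ p
        · -- CASE 2b(ii) : transfer p from b to f0, split off p-1, triple merge with g
          have hgp := good_p hp3
          have hgpm1 := good_pm1 hp3
          have hpdiv : (p - 1) / p = 0 := Nat.div_eq_of_lt (by omega)
          have hpm1div : (p - 1 - 1) / p = 0 := Nat.div_eq_of_lt (by omega)
          have hgB' := good_pack (p := p) hp3
            (rfl : ab' * p + rb + 1 = ab' * p + rb + 1) hrb0 hrbp
          have hring_f : (af + 1) * p = af * p + p := by ring
          have hFPrepr : f0 + p = (af + 1) * p + rf + 1 := by omega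
          have hgFP := good_pack hp3 hFPrepr hrf0 hrfp
          have hF1repr : f0 + 1 = af * p + (rf + 1) + 1 := by omega
          have hgF1 := good_pack hp3 hF1repr (by omega) (by omega)
          have hring_M : (af + ag + 1) * p = af * p + ag * p + p := by ring
          have hMrepr : f0 + p + g = (af + ag + 1) * p + (2 * rf + 1) + 1 := by omega
          have hgM := good_pack hp3 hMrepr (by omega) (by omega)
          set B' := ab' * p + rb + 1 with hB'def
          have hEΩ : (b ::ₘ f0 ::ₘ g ::ₘ rest) ∈ Omega p d :=
            ⟨by simp only [Multiset.sum_cons]; omega, hgoodE⟩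
          have hrestgood : ∀ z ∈ rest, 2 ≤ z ∧ ¬ z ≡ 1 [MOD p] := fun z hz =>
            hgoodE z (Multiset.mem_cons_of_mem
              (Multiset.mem_cons_of_mem (Multiset.mem_cons_of_mem hz)))
          have hE1Ω : (p ::ₘ B' ::ₘ f0 ::ₘ g ::ₘ rest) ∈ Omega p d := by
            refine ⟨by simp only [Multiset.sum_cons]; omega, ?_⟩
            intro z hz
            rcases Multiset.mem_cons.mp hz with rfl | hz
            · exact hgp
            rcases Multiset.mem_cons.mp hz with rfl | hz
            · exact hgB'.1
            rcases Multiset.mem_cons.mp hz with rfl | hz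
            · exact hgf
            rcases Multiset.mem_cons.mp hz with rfl | hz
            · exact hgg
            · exact hrestgood z hz
          have hE2Ω : ((f0 + p) ::ₘ B' ::ₘ g ::ₘ rest) ∈ Omega p d := by
            refine ⟨by simp only [Multiset.sum_cons]; omega, ?_⟩
            intro z hz
            rcases Multiset.mem_cons.mp hz with rfl | hz
            · exact hgFP.1
            rcases Multiset.mem_cons.mp hz with rfl | hz
            · exact hgB'.1
            rcases Multiset.mem_cons.mp hz with rfl | hz
            · exact hgg
            · exact hrestgood z hz
          have hE3Ω : ((p - 1) ::ₘ (f0 + 1) ::ₘ B' ::ₘ g ::ₘ rest) ∈ Omega p d := by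
            refine ⟨by simp only [Multiset.sum_cons]; omega, ?_⟩
            intro z hz
            rcases Multiset.mem_cons.mp hz with rfl | hz
            · exact hgpm1
            rcases Multiset.mem_cons.mp hz with rfl | hz
            · exact hgF1.1
            rcases Multiset.mem_cons.mp hz with rfl | hz
            · exact hgB'.1
            rcases Multiset.mem_cons.mp hz with rfl | hz
            · exact hgg
            · exact hrestgood z hz
          have hE4Ω : ((f0 + p + g) ::ₘ B' ::ₘ rest) ∈ Omega p d := by
            refine ⟨by simp only [Multiset.sum_cons]; omega, ?_⟩
            intro z hz
            rcases Multiset.mem_cons.mp hz with rfl | hz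
            · exact hgM.1
            rcases Multiset.mem_cons.mp hz with rfl | hz
            · exact hgB'.1
            · exact hrestgood z hz
          have hstep1 : S p d (b ::ₘ f0 ::ₘ g ::ₘ rest) (p ::ₘ B' ::ₘ f0 ::ₘ g ::ₘ rest) := by
            refine ⟨hEΩ, hE1Ω, Or.inl ?_⟩
            refine ⟨b, Multiset.mem_cons_self _ _, {p, B'}, ?_, ?_, ?_, ?_⟩
            · rw [Multiset.erase_cons_head, add_pair]
            · show p + B' = b
              omega
            · intro z hz
              simp only [Multiset.insert_eq_cons, Multiset.mem_cons, Multiset.mem_singleton] at hz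
              rcases hz with rfl | rfl
              · exact hgp
              · exact hgB'.1
            · left
              refine ⟨p, B', rfl, ?_⟩
              rw [hpdiv, hgB'.2.1, hbdiv]
              omega
          have hstep2 : S p d (p ::ₘ B' ::ₘ f0 ::ₘ g ::ₘ rest) ((f0 + p) ::ₘ B' ::ₘ g ::ₘ rest) := by
            refine ⟨hE1Ω, hE2Ω, Or.inr ?_⟩
            refine ⟨f0 + p, Multiset.mem_cons_self _ _, {p, f0}, ?_, ?_, ?_, ?_⟩
            · rw [Multiset.erase_cons_head, add_pair, Multiset.cons_swap B' f0]
            · show p + f0 = f0 + p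
              omega
            · intro z hz
              simp only [Multiset.insert_eq_cons, Multiset.mem_cons, Multiset.mem_singleton] at hz
              rcases hz with rfl | rfl
              · exact hgp
              · exact hgf
            · left
              refine ⟨p, f0, rfl, ?_⟩
              rw [hpdiv, hfdiv, hgFP.2.1]
              omega
          have hstep3 : S p d ((f0 + p) ::ₘ B' ::ₘ g ::ₘ rest)
              ((p - 1) ::ₘ (f0 + 1) ::ₘ B' ::ₘ g ::ₘ rest) := by
            refine ⟨hE2Ω, hE3Ω, Or.inl ?_⟩
            refine ⟨f0 + p, Multiset.mem_cons_self _ _, {p - 1, f0 + 1}, ?_, ?_, ?_, ?_⟩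
            · rw [Multiset.erase_cons_head, add_pair]
            · show (p - 1) + (f0 + 1) = f0 + p
              omega
            · intro z hz
              simp only [Multiset.insert_eq_cons, Multiset.mem_cons, Multiset.mem_singleton] at hz
              rcases hz with rfl | rfl
              · exact hgpm1
              · exact hgF1.1
            · left
              refine ⟨p - 1, f0 + 1, rfl, ?_⟩
              rw [hpm1div, hgF1.2.1, hgFP.2.1]
              omega
          have hstep4 : S p d ((p - 1) ::ₘ (f0 + 1) ::ₘ B' ::ₘ g ::ₘ rest)
              ((f0 + p + g) ::ₘ B' ::ₘ rest) := by
            refine ⟨hE3Ω, hE4Ω, Or.inr ?_⟩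
            refine ⟨f0 + p + g, Multiset.mem_cons_self _ _, {p - 1, f0 + 1, g}, ?_, ?_, ?_, ?_⟩
            · rw [Multiset.erase_cons_head, add_triple, Multiset.cons_swap B' g]
            · show (p - 1) + (f0 + 1 + g) = f0 + p + g
              omega
            · intro z hz
              simp only [Multiset.insert_eq_cons, Multiset.mem_cons, Multiset.mem_singleton] at hz
              rcases hz with rfl | rfl | rfl
              · exact hgpm1
              · exact hgF1.1
              · exact hgg
            · right; right; left
              exact ⟨by simp, by simp⟩
          refine Relation.ReflTransGen.head hstep1 (Relation.ReflTransGen.head hstep2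
            (Relation.ReflTransGen.head hstep3 (Relation.ReflTransGen.head hstep4
              (ih (k1 + 1) (by omega) _ ?_ hE4Ω ?_))))
          · simp only [Multiset.card_cons]; omega
          · exact ⟨f0 + p + g, Multiset.mem_cons_self _ _, by omega⟩
        · -- CASE 2b(iii) : all three residues equal (p-1)/2 : type (b) merge
          have hpodd : 2 * rf + 1 = p := by omega
          have hrbrf : rb = rf := by omega
          have hringM : (ab' + 1 + af + ag + 1) * p = ab' * p + af * p + ag * p + p + p := by ring
          have hMrepr : b + f0 + g = (ab' + 1 + af + ag + 1) * p + (rf + 1) + 1 := by omega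
          have hgM := good_pack hp3 hMrepr (by omega) (by omega)
          have hEΩ : (b ::ₘ f0 ::ₘ g ::ₘ rest) ∈ Omega p d :=
            ⟨by simp only [Multiset.sum_cons]; omega, hgoodE⟩
          have hMΩ : ((b + f0 + g) ::ₘ rest) ∈ Omega p d := by
            refine ⟨by simp only [Multiset.sum_cons]; omega, ?_⟩
            intro z hz
            rcases Multiset.mem_cons.mp hz with rfl | hz
            · exact hgM.1
            · exact hgoodE z (Multiset.mem_cons_of_mem
                (Multiset.mem_cons_of_mem (Multiset.mem_cons_of_mem hz)))
          have hhalf : (p + 1) / 2 = rf + 1 := by omega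
          have hmodhalf : ((p + 1) / 2) % p = rf + 1 := by
            rw [hhalf, Nat.mod_eq_of_lt (by omega)]
          have hstep : S p d (b ::ₘ f0 ::ₘ g ::ₘ rest) ((b + f0 + g) ::ₘ rest) := by
            refine ⟨hEΩ, hMΩ, Or.inr ?_⟩
            refine ⟨b + f0 + g, Multiset.mem_cons_self _ _, {b, f0, g}, ?_, ?_, ?_, ?_⟩
            · rw [Multiset.erase_cons_head, add_triple]
            · show b + (f0 + g) = b + f0 + g
              omega
            · intro z hz
              simp only [Multiset.insert_eq_cons, Multiset.mem_cons, Multiset.mem_singleton] at hz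
              rcases hz with rfl | rfl | rfl
              · exact hgb
              · exact hgf
              · exact hgg
            · right; left
              refine ⟨by simp, ?_⟩
              intro z hz
              simp only [Multiset.insert_eq_cons, Multiset.mem_cons, Multiset.mem_singleton] at hz
              rcases hz with rfl | rfl | rfl
              · show z % p = ((p + 1) / 2) % p
                have hb2 : z = (ab' + 1) * p + (rf + 1) := by omega
                rw [hmodhalf, hb2, (dm _ _ (by omega) (by omega)).2]
              · show z % p = ((p + 1) / 2) % p
                have hf2 : z = af * p + (rf + 1) := by omega
                rw [hmodhalf, hf2, (dm _ _ (by omega) (by omega)).2]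
              · show z % p = ((p + 1) / 2) % p
                have hg2 : z = ag * p + (rf + 1) := by omega
                rw [hmodhalf, hg2, (dm _ _ (by omega) (by omega)).2]
          refine Relation.ReflTransGen.head hstep (ih k1 (by omega) _ ?_ hMΩ ?_)
          · simp only [Multiset.card_cons]; omega
          · exact ⟨b + f0 + g, Multiset.mem_cons_self _ _, by omega⟩

end Stmt15Aux

/-- Let `p ≥ 3` be a prime and `d ≥ 1` with `d + 2 ≢ 1 (mod p)`.  Then any two elements of
`Ω_d` each containing at least one entry `≥ p` are joined by a finite chain of elements of
`Ω_d` in which consecutive members are related by an elementary move of type (a)–(d) (in one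
direction or the other). -/
theorem stmt15 (p d : ℕ) (hp : p.Prime) (hp3 : 3 ≤ p) (hd : 0 < d)
    (hdmod : ¬ d + 2 ≡ 1 [MOD p])
    (E E' : Multiset ℕ) (hE : E ∈ Omega p d) (hE' : E' ∈ Omega p d)
    (hEbig : ∃ e ∈ E, p ≤ e) (hE'big : ∃ e ∈ E', p ≤ e) :
    Relation.ReflTransGen
      (fun A B => A ∈ Omega p d ∧ B ∈ Omega p d ∧
        (ElemMoveABCD p A B ∨ ElemMoveABCD p B A)) E E' := by
  have h1 := Stmt15Aux.key p d hp3 hdmod _ E rfl hE hEbig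
  have h2 := Stmt15Aux.key p d hp3 hdmod _ E' rfl hE' hE'big
  exact h1.trans (Stmt15Aux.rtg_symm Stmt15Aux.S_symm h2)
end
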